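/- arXiv:2009.11540 — 8 statements merged into one kernel-verified Lean document; each statement's English description precedes it below -/
import Mathlib

section
/- Let n, p, m be natural numbers, let λ : Fin n → ℂ satisfy Re(λ i) < 0 for all i, and let Φ : Fin n → Matrix (Fin p) (Fin m) ℂ. Define the Hermitian-type matrix Q ∈ Matrix (Fin n) (Fin n) ℂ by Q i j = tr(Φ i · (Φ j)ᴴ) / (−λ i − conj(λ j)). Then for every vector α : Fin n → ℝ, the truncation error satisfies (1/(2π)) · ∫_{ν ∈ ℝ} ‖∑ i, (1 − α i) • ((I·ν − λ i)⁻¹ • Φ i)‖_F² dν = ∑ i, ∑ j, (1 − α i) · (1 − α j) · Q i j, where the double sum on the right is a real number (i.e., the complex double sum equals the coercion of the real-valued integral on the left). -/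
open MeasureTheory Complex Matrix Filter Topology

lemma aux_re (lam : ℂ) (ν : ℝ) : (Complex.I * ν - lam).re = -lam.re := by
  simp [Complex.sub_re, Complex.mul_re]

lemma aux_im (lam : ℂ) (ν : ℝ) : (Complex.I * ν - lam).im = ν - lam.im := by
  simp [Complex.sub_im, Complex.mul_im]

lemma aux_ne {lam : ℂ} (h : lam.re < 0) (ν : ℝ) : Complex.I * ν - lam ≠ 0 := by
  intro hz
  have := congrArg Complex.re hz
  rw [aux_re] at this
  simp at this; linarith

lemma integrable_shift_sq {a : ℝ} (ha : a ≠ 0) (b : ℝ) :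
    Integrable fun x : ℝ => (a ^ 2 + (x - b) ^ 2)⁻¹ := by
  have h1 : Integrable fun x : ℝ => (1 + (x / a) ^ 2)⁻¹ :=
    integrable_inv_one_add_sq.comp_div ha
  have h2 : Integrable fun x : ℝ => (a ^ 2 + x ^ 2)⁻¹ := by
    have := h1.const_mul ((a ^ 2)⁻¹)
    refine this.congr (Filter.EventuallyEq.of_eq ?_)
    funext x
    field_simp
  exact h2.comp_sub_right b

lemma continuous_g {lam : ℂ} (h : lam.re < 0) :
    Continuous fun ν : ℝ => (Complex.I * ν - lam)⁻¹ := by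
  apply Continuous.inv₀
  · fun_prop
  · exact fun ν => aux_ne h ν

lemma norm_g_sq (lam : ℂ) (ν : ℝ) :
    ‖(Complex.I * ν - lam)⁻¹‖ ^ 2 = (lam.re ^ 2 + (ν - lam.im) ^ 2)⁻¹ := by
  rw [norm_inv, inv_pow]
  congr 1
  rw [Complex.sq_norm, Complex.normSq_apply, aux_re, aux_im]
  ring

lemma integrable_g_sq {lam : ℂ} (h : lam.re < 0) :
    Integrable fun ν : ℝ => ‖(Complex.I * ν - lam)⁻¹‖ ^ 2 := by
  refine (integrable_shift_sq (ne_of_lt h) lam.im).congr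
    (Filter.EventuallyEq.of_eq ?_)
  funext ν
  rw [norm_g_sq]

lemma integrable_prod {lam mu : ℂ} (h1 : lam.re < 0) (h2 : mu.re < 0) :
    Integrable fun ν : ℝ =>
      (Complex.I * ν - lam)⁻¹ * (starRingEnd ℂ) ((Complex.I * ν - mu)⁻¹) := by
  have hm : AEStronglyMeasurable
      (fun ν : ℝ => (Complex.I * ν - lam)⁻¹ * (starRingEnd ℂ) ((Complex.I * ν - mu)⁻¹))
      volume :=
    ((continuous_g h1).mul (Complex.continuous_conj.comp (continuous_g h2))).aestronglyMeasurable
  refine Integrable.mono (((integrable_g_sq h1).add (integrable_g_sq h2)).const_mul (1/2)) hm ?_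
  filter_upwards with ν
  rw [norm_mul, RCLike.norm_conj]
  set a := ‖(Complex.I * ν - lam)⁻¹‖
  set b := ‖(Complex.I * ν - mu)⁻¹‖
  have ha : 0 ≤ a := norm_nonneg _
  have hb : 0 ≤ b := norm_nonneg _
  have h3 : 2 * a * b ≤ a ^ 2 + b ^ 2 := two_mul_le_add_sq a b
  simp only [Pi.add_apply]
  rw [Real.norm_eq_abs, _root_.abs_of_nonneg (by positivity)]
  nlinarith

lemma conj_g (mu : ℂ) (ν : ℝ) :
    (starRingEnd ℂ) ((Complex.I * ν - mu)⁻¹) =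
      (-(Complex.I * ν) - (starRingEnd ℂ) mu)⁻¹ := by
  rw [map_inv₀]
  congr 1
  simp [map_sub, _root_.map_mul, Complex.conj_I]

lemma aux_ne' {mu : ℂ} (h : mu.re < 0) (ν : ℝ) :
    -(Complex.I * ν) - (starRingEnd ℂ) mu ≠ 0 := by
  intro hz
  have := congrArg Complex.re hz
  simp [Complex.sub_re, Complex.neg_re, Complex.mul_re] at this
  linarith

noncomputable def Fant (lam mu : ℂ) (t : ℝ) : ℂ :=
  -Complex.I * Complex.log (Complex.I * t - lam) +
    Complex.I * Complex.log (-(Complex.I * t) - (starRingEnd ℂ) mu)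

lemma hasDerivAt_inner (ν : ℝ) :
    HasDerivAt (fun t : ℝ => Complex.I * (t : ℂ)) Complex.I ν := by
  simpa using ((hasDerivAt_id ν).ofReal_comp.const_mul Complex.I)

lemma hasDerivAt_Fant {lam mu : ℂ} (h1 : lam.re < 0) (h2 : mu.re < 0) (ν : ℝ) :
    HasDerivAt (Fant lam mu)
      ((Complex.I * ν - lam)⁻¹ + (-(Complex.I * ν) - (starRingEnd ℂ) mu)⁻¹) ν := by
  have hA : Complex.I * ν - lam ∈ Complex.slitPlane := by
    rw [Complex.mem_slitPlane_iff]; left; rw [aux_re]; linarith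
  have hB : -(Complex.I * ν) - (starRingEnd ℂ) mu ∈ Complex.slitPlane := by
    rw [Complex.mem_slitPlane_iff]; left
    simp [Complex.sub_re, Complex.neg_re, Complex.mul_re]
    linarith
  have hdA : HasDerivAt (fun t : ℝ => Complex.I * t - lam) Complex.I ν :=
    (hasDerivAt_inner ν).sub_const lam
  have hdB : HasDerivAt (fun t : ℝ => -(Complex.I * t) - (starRingEnd ℂ) mu)
      (-Complex.I) ν :=
    ((hasDerivAt_inner ν).neg).sub_const _
  have h1' := (hdA.clog_real hA).const_mul (-Complex.I)
  have h2' := (hdB.clog_real hB).const_mul Complex.I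
  have := h1'.add h2'
  convert this using 1
  · rfl
  · rfl
  · linear_combination ((Complex.I * (ν : ℂ) - lam)⁻¹ + (-(Complex.I * (ν : ℂ)) - (starRingEnd ℂ) mu)⁻¹) * Complex.I_sq

lemma continuous_sum_fn {lam mu : ℂ} (h1 : lam.re < 0) (h2 : mu.re < 0) :
    Continuous fun ν : ℝ =>
      (Complex.I * ν - lam)⁻¹ + (-(Complex.I * ν) - (starRingEnd ℂ) mu)⁻¹ := by
  apply (continuous_g h1).add
  apply Continuous.inv₀
  · fun_prop
  · exact fun ν => aux_ne' h2 ν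

lemma integrable_sum_fn {lam mu : ℂ} (h1 : lam.re < 0) (h2 : mu.re < 0) :
    Integrable fun ν : ℝ =>
      (Complex.I * ν - lam)⁻¹ + (-(Complex.I * ν) - (starRingEnd ℂ) mu)⁻¹ := by
  have hprod := (integrable_prod h1 h2).const_mul (-lam - (starRingEnd ℂ) mu)
  refine hprod.congr (Filter.EventuallyEq.of_eq ?_)
  funext ν
  rw [conj_g]
  have hA := aux_ne h1 ν
  have hB := aux_ne' h2 ν
  field_simp
  ring

lemma tendsto_log_aux (w : ℂ) (z : ℂ) (hz : z ∈ Complex.slitPlane) (hz0 : ∀ R : ℝ, 0 < R → z - w / R ≠ 0) :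
    Tendsto (fun R : ℝ => Complex.log (z - w / R)) atTop (𝓝 (Complex.log z)) := by
  have h0 : Tendsto (fun R : ℝ => z - w / R) atTop (𝓝 z) := by
    have : Tendsto (fun R : ℝ => w / (R : ℂ)) atTop (𝓝 0) := by
      have h1 : Tendsto (fun R : ℝ => ((R : ℝ)⁻¹ : ℝ)) atTop (𝓝 0) := tendsto_inv_atTop_zero
      have h2 : Tendsto (fun R : ℝ => ((R⁻¹ : ℝ) : ℂ)) atTop (𝓝 ((0 : ℝ) : ℂ)) :=
        (Complex.continuous_ofReal.tendsto 0).comp h1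
      have h3 : Tendsto (fun R : ℝ => w * ((R⁻¹ : ℝ) : ℂ)) atTop (𝓝 (w * 0)) :=
        h2.const_mul w
      simpa [div_eq_mul_inv, Complex.ofReal_inv] using h3
    simpa using tendsto_const_nhds.sub this
  exact (continuousAt_clog hz).tendsto.comp h0


lemma sub_div_ne {w : ℂ} (hw : w.re < 0) {z : ℂ} (hzre : z.re = 0) {R : ℝ} (hR : 0 < R) :
    z - w / R ≠ 0 := by
  intro hz
  have := congrArg Complex.re hz
  rw [Complex.sub_re, Complex.div_ofReal_re, hzre] at this
  simp at this
  rcases this with h | h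
  · linarith
  · linarith

lemma log_split {w : ℂ} (hw : w.re < 0) {z : ℂ} (hzre : z.re = 0) {R : ℝ} (hR : 0 < R) :
    Complex.log (z * R - w) = Real.log R + Complex.log (z - w / R) := by
  have hR0 : (R : ℂ) ≠ 0 := Complex.ofReal_ne_zero.mpr (ne_of_gt hR)
  have hx : z - w / R ≠ 0 := sub_div_ne hw hzre hR
  have h : z * (R : ℂ) - w = (R : ℂ) * (z - w / R) := by field_simp
  rw [h, Complex.log_ofReal_mul hR hx]

lemma tendsto_Fant {lam mu : ℂ} (h1 : lam.re < 0) (h2 : mu.re < 0) :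
    Tendsto (fun R : ℝ => Fant lam mu R - Fant lam mu (-R)) atTop
      (𝓝 ((2 * Real.pi : ℝ) : ℂ)) := by
  have hmu : ((starRingEnd ℂ) mu).re < 0 := by simpa using h2
  have hIre : (Complex.I).re = 0 := Complex.I_re
  have hnIre : (-Complex.I).re = 0 := by simp
  have hI : Complex.I ∈ Complex.slitPlane := by
    rw [Complex.mem_slitPlane_iff]; right; simp
  have hnI : -Complex.I ∈ Complex.slitPlane := by
    rw [Complex.mem_slitPlane_iff]; right; simp
  have t1 : Tendsto (fun R : ℝ => Complex.log (Complex.I - lam / R)) atTop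
      (𝓝 (Complex.log Complex.I)) :=
    tendsto_log_aux lam Complex.I hI (fun R hR => sub_div_ne h1 hIre hR)
  have t2 : Tendsto (fun R : ℝ => Complex.log (-Complex.I - lam / R)) atTop
      (𝓝 (Complex.log (-Complex.I))) :=
    tendsto_log_aux lam (-Complex.I) hnI (fun R hR => sub_div_ne h1 hnIre hR)
  have t3 : Tendsto (fun R : ℝ => Complex.log (-Complex.I - (starRingEnd ℂ) mu / R)) atTop
      (𝓝 (Complex.log (-Complex.I))) :=
    tendsto_log_aux _ (-Complex.I) hnI (fun R hR => sub_div_ne hmu hnIre hR)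
  have t4 : Tendsto (fun R : ℝ => Complex.log (Complex.I - (starRingEnd ℂ) mu / R)) atTop
      (𝓝 (Complex.log Complex.I)) :=
    tendsto_log_aux _ Complex.I hI (fun R hR => sub_div_ne hmu hIre hR)
  have hG : Tendsto (fun R : ℝ =>
      -Complex.I * (Complex.log (Complex.I - lam / R) - Complex.log (-Complex.I - lam / R)) +
        Complex.I * (Complex.log (-Complex.I - (starRingEnd ℂ) mu / R) -
          Complex.log (Complex.I - (starRingEnd ℂ) mu / R))) atTop
      (𝓝 (-Complex.I * (Complex.log Complex.I - Complex.log (-Complex.I)) +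
        Complex.I * (Complex.log (-Complex.I) - Complex.log Complex.I))) :=
    ((t1.sub t2).const_mul (-Complex.I)).add ((t3.sub t4).const_mul Complex.I)
  have hL : -Complex.I * (Complex.log Complex.I - Complex.log (-Complex.I)) +
      Complex.I * (Complex.log (-Complex.I) - Complex.log Complex.I)
      = ((2 * Real.pi : ℝ) : ℂ) := by
    rw [Complex.log_I, Complex.log_neg_I]
    push_cast
    ring_nf
    rw [Complex.I_sq]
    ring
  rw [← hL]
  refine hG.congr' ?_
  filter_upwards [eventually_gt_atTop (0 : ℝ)] with R hR
  have l1 := log_split h1 hIre hR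
  have l2 := log_split h1 hnIre hR
  have l3 := log_split hmu hnIre hR
  have l4 := log_split hmu hIre hR
  simp only [Fant]
  push_cast
  rw [show Complex.I * -(R : ℂ) - lam = -Complex.I * R - lam by ring,
    show -(Complex.I * -(R : ℂ)) - (starRingEnd ℂ) mu
      = Complex.I * R - (starRingEnd ℂ) mu by ring,
    show -(Complex.I * (R : ℂ)) - (starRingEnd ℂ) mu
      = -Complex.I * R - (starRingEnd ℂ) mu by ring,
    l1, l2, l3, l4]
  ring

lemma integral_sum_fn {lam mu : ℂ} (h1 : lam.re < 0) (h2 : mu.re < 0) :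
    (∫ ν : ℝ, ((Complex.I * ν - lam)⁻¹ + (-(Complex.I * ν) - (starRingEnd ℂ) mu)⁻¹))
      = 2 * Real.pi := by
  set f := fun ν : ℝ =>
    (Complex.I * ν - lam)⁻¹ + (-(Complex.I * ν) - (starRingEnd ℂ) mu)⁻¹ with hf
  have hint := integrable_sum_fn h1 h2
  have hti : Tendsto (fun R : ℝ => ∫ ν in (-R)..R, f ν) atTop (𝓝 (∫ ν : ℝ, f ν)) :=
    intervalIntegral_tendsto_integral hint tendsto_neg_atTop_atBot tendsto_id
  have heq : ∀ R : ℝ, (∫ ν in (-R)..R, f ν) = Fant lam mu R - Fant lam mu (-R) := by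
    intro R
    exact intervalIntegral.integral_eq_sub_of_hasDerivAt
      (fun t _ => hasDerivAt_Fant h1 h2 t)
      ((continuous_sum_fn h1 h2).intervalIntegrable _ _)
  have hlim : Tendsto (fun R : ℝ => Fant lam mu R - Fant lam mu (-R)) atTop
      (𝓝 ((2 * Real.pi : ℝ) : ℂ)) := tendsto_Fant h1 h2
  have hti' : Tendsto (fun R : ℝ => Fant lam mu R - Fant lam mu (-R)) atTop
      (𝓝 (∫ ν : ℝ, f ν)) := hti.congr heq
  have h2pi := tendsto_nhds_unique hti' hlim
  rw [h2pi]; push_cast; ring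

lemma key_integral {lam mu : ℂ} (h1 : lam.re < 0) (h2 : mu.re < 0) :
    (∫ ν : ℝ, (Complex.I * ν - lam)⁻¹ * (starRingEnd ℂ) ((Complex.I * ν - mu)⁻¹))
      = 2 * Real.pi / (-lam - (starRingEnd ℂ) mu) := by
  set c := -lam - (starRingEnd ℂ) mu with hcdef
  have hc : c ≠ 0 := by
    intro h
    have := congrArg Complex.re h
    simp [hcdef, Complex.sub_re, Complex.neg_re, Complex.conj_re] at this
    linarith
  have hpt : ∀ ν : ℝ, (Complex.I * ν - lam)⁻¹ + (-(Complex.I * ν) - (starRingEnd ℂ) mu)⁻¹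
      = c * ((Complex.I * ν - lam)⁻¹ * (starRingEnd ℂ) ((Complex.I * ν - mu)⁻¹)) := by
    intro ν
    rw [conj_g]
    have hA := aux_ne h1 ν
    have hB := aux_ne' h2 ν
    field_simp [hcdef]
    ring
  have h0 : (∫ ν : ℝ, ((Complex.I * ν - lam)⁻¹ + (-(Complex.I * ν) - (starRingEnd ℂ) mu)⁻¹))
      = c * ∫ ν : ℝ, (Complex.I * ν - lam)⁻¹ * (starRingEnd ℂ) ((Complex.I * ν - mu)⁻¹) := by
    rw [← integral_const_mul]
    exact integral_congr_ae (Filter.EventuallyEq.of_eq (funext hpt))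
  have h2pi := integral_sum_fn h1 h2
  rw [h0] at h2pi
  push_cast
  rw [eq_div_iff hc]
  rw [← h2pi]
  ring

/-- Squared Frobenius norm of a complex matrix. -/
noncomputable def frobSq {p m : ℕ} (M : Matrix (Fin p) (Fin m) ℂ) : ℝ :=
  ∑ i, ∑ j, ‖M i j‖ ^ 2

lemma swap4 {n p m : ℕ} (f : Fin p → Fin m → Fin n → Fin n → ℂ) :
    ∑ k, ∑ l, ∑ i, ∑ j, f k l i j = ∑ i, ∑ j, ∑ k, ∑ l, f k l i j := by
  calc ∑ k, ∑ l, ∑ i, ∑ j, f k l i j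
      = ∑ k, ∑ i, ∑ l, ∑ j, f k l i j :=
        Finset.sum_congr rfl fun k _ => Finset.sum_comm
    _ = ∑ i, ∑ k, ∑ l, ∑ j, f k l i j := Finset.sum_comm
    _ = ∑ i, ∑ k, ∑ j, ∑ l, f k l i j :=
        Finset.sum_congr rfl fun i _ => Finset.sum_congr rfl fun k _ => Finset.sum_comm
    _ = ∑ i, ∑ j, ∑ k, ∑ l, f k l i j :=
        Finset.sum_congr rfl fun i _ => Finset.sum_comm

theorem optimal_H2_modal_truncation_quadratic_form
    (n p m : ℕ) (lam : Fin n → ℂ) (hlam : ∀ i, (lam i).re < 0)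
    (Φ : Fin n → Matrix (Fin p) (Fin m) ℂ)
    (Q : Matrix (Fin n) (Fin n) ℂ)
    (hQ : ∀ i j, Q i j = (Φ i * (Φ j)ᴴ).trace / (-lam i - (starRingEnd ℂ) (lam j)))
    (α : Fin n → ℝ) :
    ((((1 : ℝ) / (2 * Real.pi)) *
        ∫ ν : ℝ, frobSq (∑ i, (1 - α i) • ((Complex.I * (ν : ℂ) - lam i)⁻¹ • Φ i)) : ℝ) : ℂ) =
      ∑ i, ∑ j, ((1 - α i : ℝ) : ℂ) * ((1 - α j : ℝ) : ℂ) * Q i j := by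
  set c : Fin n → ℂ := fun i => ((1 - α i : ℝ) : ℂ) with hc
  set T : Fin n → Fin n → ℂ := fun i j => ∑ k, ∑ l, Φ i k l * (starRingEnd ℂ) (Φ j k l)
    with hT
  set gp : Fin n → Fin n → ℝ → ℂ := fun i j ν =>
    (Complex.I * ν - lam i)⁻¹ * (starRingEnd ℂ) ((Complex.I * ν - lam j)⁻¹) with hgp
  have habs : ∀ z : ℂ, ((‖z‖ ^ 2 : ℝ) : ℂ) = z * (starRingEnd ℂ) z := by
    intro z; rw [Complex.sq_norm]; exact (Complex.mul_conj z).symm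
  have hpt : ∀ ν : ℝ,
      ((frobSq (∑ i, (1 - α i) • ((Complex.I * (ν : ℂ) - lam i)⁻¹ • Φ i)) : ℝ) : ℂ)
        = ∑ i, ∑ j, (c i * c j * T i j) * gp i j ν := by
    intro ν
    have hentry : ∀ k l, (∑ i, (1 - α i) • ((Complex.I * (ν : ℂ) - lam i)⁻¹ • Φ i)) k l
        = ∑ i, c i * ((Complex.I * (ν : ℂ) - lam i)⁻¹ * Φ i k l) := by
      intro k l
      simp [Matrix.sum_apply, Matrix.smul_apply, smul_eq_mul, Complex.real_smul, hc,
        mul_assoc]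
    rw [frobSq]
    push_cast [habs]
    simp only [hentry]
    have : ∀ k l, (∑ i, c i * ((Complex.I * (ν : ℂ) - lam i)⁻¹ * Φ i k l)) *
        (starRingEnd ℂ) (∑ i, c i * ((Complex.I * (ν : ℂ) - lam i)⁻¹ * Φ i k l))
        = ∑ i, ∑ j, (c i * ((Complex.I * (ν : ℂ) - lam i)⁻¹ * Φ i k l)) *
            ((starRingEnd ℂ) (c j) *
              ((starRingEnd ℂ) ((Complex.I * (ν : ℂ) - lam j)⁻¹) *
                (starRingEnd ℂ) (Φ j k l))) := by
      intro k l
      rw [map_sum, Finset.sum_mul_sum]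
      simp only [_root_.map_mul]
    simp only [this]
    rw [swap4]
    refine Finset.sum_congr rfl fun i _ => Finset.sum_congr rfl fun j _ => ?_
    have hconjc : (starRingEnd ℂ) (c j) = c j := Complex.conj_ofReal _
    simp only [hconjc, hT, hgp, Finset.mul_sum, Finset.sum_mul]
    refine Finset.sum_congr rfl fun k _ => Finset.sum_congr rfl fun l _ => ?_
    ring
  have hIntG : ∀ i j : Fin n,
      Integrable (fun ν : ℝ => (c i * c j * T i j) * gp i j ν) :=
    fun i j => (integrable_prod (hlam i) (hlam j)).const_mul _
  have h1 : ((∫ ν : ℝ, frobSq (∑ i, (1 - α i) •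
        ((Complex.I * (ν : ℂ) - lam i)⁻¹ • Φ i)) : ℝ) : ℂ)
      = ∑ i, ∑ j, (c i * c j * T i j) *
          (2 * Real.pi / (-lam i - (starRingEnd ℂ) (lam j))) := by
    have hcoe : ((∫ ν : ℝ, frobSq (∑ i, (1 - α i) •
          ((Complex.I * (ν : ℂ) - lam i)⁻¹ • Φ i)) : ℝ) : ℂ)
        = ∫ ν : ℝ, ((frobSq (∑ i, (1 - α i) •
            ((Complex.I * (ν : ℂ) - lam i)⁻¹ • Φ i)) : ℝ) : ℂ) := (integral_ofReal).symm
    rw [hcoe]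
    calc (∫ ν : ℝ, ((frobSq (∑ i, (1 - α i) •
            ((Complex.I * (ν : ℂ) - lam i)⁻¹ • Φ i)) : ℝ) : ℂ))
        = ∫ ν : ℝ, ∑ i, ∑ j, (c i * c j * T i j) * gp i j ν := by
          exact integral_congr_ae (Filter.EventuallyEq.of_eq (funext hpt))
      _ = ∑ i, ∑ j, ∫ ν : ℝ, (c i * c j * T i j) * gp i j ν := by
          rw [integral_finset_sum _ (fun i _ => integrable_finset_sum _ (fun j _ => hIntG i j))]
          exact Finset.sum_congr rfl fun i _ => integral_finset_sum _ (fun j _ => hIntG i j)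
      _ = ∑ i, ∑ j, (c i * c j * T i j) *
            (2 * Real.pi / (-lam i - (starRingEnd ℂ) (lam j))) := by
          refine Finset.sum_congr rfl fun i _ => Finset.sum_congr rfl fun j _ => ?_
          rw [integral_const_mul, key_integral (hlam i) (hlam j)]
  have htr : ∀ i j, (Φ i * (Φ j)ᴴ).trace = T i j := by
    intro i j
    simp [Matrix.trace, Matrix.diag, Matrix.mul_apply, Matrix.conjTranspose_apply, hT,
      RCLike.star_def]
  push_cast
  rw [h1, Finset.mul_sum]
  refine Finset.sum_congr rfl fun i _ => ?_
  rw [Finset.mul_sum]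
  refine Finset.sum_congr rfl fun j _ => ?_
  rw [hQ, htr]
  have hd : -lam i - (starRingEnd ℂ) (lam j) ≠ 0 := by
    intro h
    have := congrArg Complex.re h
    simp [Complex.sub_re, Complex.neg_re, Complex.conj_re] at this
    have := hlam i; have := hlam j
    linarith
  have hπ : (Real.pi : ℂ) ≠ 0 := Complex.ofReal_ne_zero.mpr Real.pi_ne_zero
  field_simp
  simp only [hc]
  push_cast
  ring
end

section
/- Let n, p, m be natural numbers, let λ : Fin n → ℂ satisfy Re(λ i) < 0 for all i, and let Φ : Fin n → Matrix (Fin p) (Fin m) ℂ. Let τ > 0 and define Q_τ ∈ Matrix (Fin n) (Fin n) ℂ by Q_τ i j = tr(Φ i · (Φ j)ᴴ) · (exp((λ i + conj(λ j)) · τ) − 1) / (λ i + conj(λ j)). Then for every vector α : Fin n → ℝ, ∫_{t ∈ [0, τ]} ‖∑ i, (1 − α i) • (exp(λ i · t) • Φ i)‖_F² dt = ∑ i, ∑ j, (1 − α i) · (1 − α j) · Q_τ i j, where the double sum on the right is a real number (i.e., the complex double sum equals the coercion of the real-valued integral on the left). -/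
open MeasureTheory Complex Matrix

theorem optimal_time_limited_h2_modal_truncation_quadratic_form
    (n p m : ℕ) (lam : Fin n → ℂ) (hlam : ∀ i, (lam i).re < 0)
    (Φ : Fin n → Matrix (Fin p) (Fin m) ℂ) (τ : ℝ) (hτ : 0 < τ)
    (Qτ : Matrix (Fin n) (Fin n) ℂ)
    (hQτ : ∀ i j, Qτ i j = (Φ i * (Φ j)ᴴ).trace *
      (Complex.exp ((lam i + (starRingEnd ℂ) (lam j)) * τ) - 1) /
        (lam i + (starRingEnd ℂ) (lam j)))
    (α : Fin n → ℝ) :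
    ((∫ t in (0 : ℝ)..τ,
        frobSq (∑ i, (1 - α i) • (Complex.exp (lam i * (t : ℂ)) • Φ i)) : ℝ) : ℂ) =
      ∑ i, ∑ j, ((1 - α i : ℝ) : ℂ) * ((1 - α j : ℝ) : ℂ) * Qτ i j := by
  set c : Fin n → ℂ := fun i => ((1 - α i : ℝ) : ℂ) with hc
  have hμ : ∀ i j : Fin n, lam i + (starRingEnd ℂ) (lam j) ≠ 0 := by
    intro i j h
    have h1 : (lam i + (starRingEnd ℂ) (lam j)).re < 0 := by
      simp only [Complex.add_re, Complex.conj_re]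
      linarith [hlam i, hlam j]
    rw [h] at h1; simp at h1
  have key : ∀ t : ℝ,
      ((frobSq (∑ i, (1 - α i) • (Complex.exp (lam i * (t : ℂ)) • Φ i)) : ℝ) : ℂ)
      = ∑ i, ∑ j, c i * c j * (Φ i * (Φ j)ᴴ).trace *
          Complex.exp ((lam i + (starRingEnd ℂ) (lam j)) * (t : ℂ)) := by
    intro t
    set M : Matrix (Fin p) (Fin m) ℂ :=
      ∑ i, (1 - α i) • (Complex.exp (lam i * (t : ℂ)) • Φ i) with hM
    have hMab : ∀ a b, M a b = ∑ i, c i * Complex.exp (lam i * (t : ℂ)) * Φ i a b := by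
      intro a b
      simp only [hM, hc, Matrix.sum_apply, Matrix.smul_apply, Complex.real_smul,
        smul_eq_mul, Complex.ofReal_sub, Complex.ofReal_one, mul_assoc]
    have h1 : ((frobSq M : ℝ) : ℂ) = ∑ a, ∑ b, M a b * (starRingEnd ℂ) (M a b) := by
      unfold frobSq
      push_cast
      refine Finset.sum_congr rfl fun a _ => Finset.sum_congr rfl fun b _ => ?_
      rw [Complex.mul_conj]
      norm_cast
      rw [Complex.sq_norm]
    rw [h1]
    have h2 : ∀ a b, M a b * (starRingEnd ℂ) (M a b)
        = ∑ i, ∑ j, c i * c j * (Φ i a b * (starRingEnd ℂ) (Φ j a b)) *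
            Complex.exp ((lam i + (starRingEnd ℂ) (lam j)) * (t : ℂ)) := by
      intro a b
      rw [hMab, map_sum, Finset.sum_mul_sum]
      refine Finset.sum_congr rfl fun i _ => Finset.sum_congr rfl fun j _ => ?_
      have hconj : (starRingEnd ℂ) (c j * Complex.exp (lam j * (t : ℂ)) * Φ j a b)
          = c j * Complex.exp ((starRingEnd ℂ) (lam j) * (t : ℂ)) * (starRingEnd ℂ) (Φ j a b) := by
        simp only [_root_.map_mul, ← Complex.exp_conj, Complex.conj_ofReal, hc]
      rw [hconj, add_mul, Complex.exp_add]
      ring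
    simp_rw [h2]
    have s1 : (∑ a : Fin p, ∑ b : Fin m, ∑ i : Fin n, ∑ j : Fin n,
        c i * c j * (Φ i a b * (starRingEnd ℂ) (Φ j a b)) *
          Complex.exp ((lam i + (starRingEnd ℂ) (lam j)) * (t : ℂ)))
        = ∑ i : Fin n, ∑ j : Fin n, ∑ a : Fin p, ∑ b : Fin m,
        c i * c j * (Φ i a b * (starRingEnd ℂ) (Φ j a b)) *
          Complex.exp ((lam i + (starRingEnd ℂ) (lam j)) * (t : ℂ)) := by
      rw [show (∑ a : Fin p, ∑ b : Fin m, ∑ i : Fin n, ∑ j : Fin n,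
          c i * c j * (Φ i a b * (starRingEnd ℂ) (Φ j a b)) *
            Complex.exp ((lam i + (starRingEnd ℂ) (lam j)) * (t : ℂ)))
          = ∑ a : Fin p, ∑ i : Fin n, ∑ b : Fin m, ∑ j : Fin n,
          c i * c j * (Φ i a b * (starRingEnd ℂ) (Φ j a b)) *
            Complex.exp ((lam i + (starRingEnd ℂ) (lam j)) * (t : ℂ))
        from Finset.sum_congr rfl fun a _ => Finset.sum_comm, Finset.sum_comm]
      refine Finset.sum_congr rfl fun i _ => ?_
      rw [show (∑ a : Fin p, ∑ b : Fin m, ∑ j : Fin n,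
          c i * c j * (Φ i a b * (starRingEnd ℂ) (Φ j a b)) *
            Complex.exp ((lam i + (starRingEnd ℂ) (lam j)) * (t : ℂ)))
          = ∑ a : Fin p, ∑ j : Fin n, ∑ b : Fin m,
          c i * c j * (Φ i a b * (starRingEnd ℂ) (Φ j a b)) *
            Complex.exp ((lam i + (starRingEnd ℂ) (lam j)) * (t : ℂ))
        from Finset.sum_congr rfl fun a _ => Finset.sum_comm, Finset.sum_comm]
    rw [s1]
    refine Finset.sum_congr rfl fun i _ => Finset.sum_congr rfl fun j _ => ?_
    have htr : (Φ i * (Φ j)ᴴ).trace = ∑ a : Fin p, ∑ b : Fin m,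
        Φ i a b * (starRingEnd ℂ) (Φ j a b) := by
      rw [Matrix.trace]
      simp only [Matrix.diag, Matrix.mul_apply, Matrix.conjTranspose_apply]
      rfl
    rw [htr, Finset.mul_sum, Finset.sum_mul]
    refine Finset.sum_congr rfl fun a _ => ?_
    rw [Finset.mul_sum, Finset.sum_mul]
  rw [← intervalIntegral.integral_ofReal]
  simp_rw [key]
  rw [intervalIntegral.integral_finset_sum]
  · refine Finset.sum_congr rfl fun i _ => ?_
    rw [intervalIntegral.integral_finset_sum]
    · refine Finset.sum_congr rfl fun j _ => ?_
      rw [intervalIntegral.integral_const_mul, integral_exp_mul_complex (hμ i j),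
        hQτ i j]
      simp only [Complex.ofReal_zero, mul_zero, Complex.exp_zero, hc]
      push_cast
      field_simp
    · intro j _
      exact (continuous_const.mul (Complex.continuous_exp.comp
        (continuous_const.mul Complex.continuous_ofReal))).intervalIntegrable _ _
  · intro i _
    apply Continuous.intervalIntegrable
    exact continuous_finset_sum _ fun j _ =>
      continuous_const.mul (Complex.continuous_exp.comp
        (continuous_const.mul Complex.continuous_ofReal))
end

section
/- Let n, p, m be natural numbers, let λ : Fin n → ℂ satisfy Re(λ i) < 0 for all i, and let Φ : Fin n → Matrix (Fin p) (Fin m) ℂ. Assume there is an involution σ : Fin n → Fin n with σ ∘ σ = id, λ(σ i) = conj(λ i), and Φ(σ i) equal to the entrywise complex conjugate of Φ i, for all i. Let α : Fin n → ℝ satisfy α(σ i) = α i for all i, let D_e be a real p × m matrix (viewed as a complex matrix with real entries), and let ω > 0. Then the coercion to ℂ of the real number (1/(2π)) · ∫_{ν ∈ [−ω, ω]} ‖D_e + ∑ i, (1 − α i) • ((I·ν − λ i)⁻¹ • Φ i)‖_F² dν equals (ω/π) · ‖D_e‖_F² − (2/π) · ∑ i, (1 − α i) · tr(Φ i · D_eᵀ)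 · atan(ω / λ i) − (2/π) · ∑ i, ∑ k, (1 − α i) · (1 − α k) · tr(Φ i · (Φ k)ᵀ) · atan(ω / λ i) / (−λ i − λ k). -/
open MeasureTheory Complex Matrix

/-- Principal-branch complex arctangent. -/
noncomputable def catan (z : ℂ) : ℂ :=
  (1 / (2 * Complex.I)) *
    (Complex.log (1 + Complex.I * z) - Complex.log (1 - Complex.I * z))

section Aux
variable {l : ℂ}

lemma lne (hl : l.re < 0) : l ≠ 0 := fun h => by simp [h] at hl

lemma subIne (hl : l.re < 0) (ν : ℝ) : Complex.I * ν - l ≠ 0 := by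
  intro h
  have : (Complex.I * ν - l).re = 0 := by rw [h]; simp
  simp [Complex.sub_re, Complex.mul_re] at this
  linarith

lemma addIne (hl : l.re < 0) (ν : ℝ) : l + Complex.I * ν ≠ 0 := by
  intro h
  have : (l + Complex.I * ν).re = 0 := by rw [h]; simp
  simp [Complex.add_re, Complex.mul_re] at this
  linarith

lemma sqaddne (hl : l.re < 0) (ν : ℝ) : l^2 + (ν:ℂ)^2 ≠ 0 := by
  have h1 : (l + Complex.I * ν) * (l - Complex.I * ν) = l^2 + (ν:ℂ)^2 := by
    have := Complex.I_sq
    ring_nf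
    rw [Complex.I_sq]
    ring
  rw [← h1]
  refine mul_ne_zero (addIne hl ν) ?_
  intro h
  exact subIne hl ν (by rw [← neg_eq_zero]; rw [neg_sub] at *; simpa [neg_sub] using h)

lemma onePlusne (hl : l.re < 0) (ν : ℝ) : 1 + Complex.I * ν / l ≠ 0 := by
  have : 1 + Complex.I * ν / l = (l + Complex.I * ν) / l := by
    rw [add_div, div_self (lne hl)]
  rw [this]
  exact div_ne_zero (addIne hl ν) (lne hl)

lemma oneSubne (hl : l.re < 0) (ν : ℝ) : 1 - Complex.I * ν / l ≠ 0 := by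
  have : 1 - Complex.I * ν / l = -(Complex.I * ν - l) / l := by
    rw [neg_sub, sub_div, div_self (lne hl)]
  rw [this]
  exact div_ne_zero (neg_ne_zero.mpr (subIne hl ν)) (lne hl)

lemma onePlus_mem (hl : l.re < 0) (ν : ℝ) : 1 + Complex.I * (ν:ℂ) / l ∈ Complex.slitPlane := by
  rcases eq_or_ne ν 0 with h | h
  · subst h; simp [Complex.mem_slitPlane_iff]
  · right
    show (1 + Complex.I * (ν:ℂ) / l).im ≠ 0
    have him : (1 + Complex.I * (ν:ℂ) / l).im = ν * l.re / Complex.normSq l := by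
      simp [Complex.add_im, Complex.div_im, Complex.mul_re, Complex.mul_im]
    rw [him]
    have hn : Complex.normSq l > 0 := Complex.normSq_pos.mpr (lne hl)
    exact div_ne_zero (mul_ne_zero (by exact_mod_cast h) (ne_of_lt hl)) (ne_of_gt hn)

lemma oneSub_mem (hl : l.re < 0) (ν : ℝ) : 1 - Complex.I * (ν:ℂ) / l ∈ Complex.slitPlane := by
  have : 1 - Complex.I * (ν:ℂ) / l = 1 + Complex.I * ((-ν : ℝ):ℂ) / l := by push_cast; ring
  rw [this]; exact onePlus_mem hl (-ν)

lemma sqadd_mem (hl : l.re < 0) (ν : ℝ) : l^2 + (ν:ℂ)^2 ∈ Complex.slitPlane := by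
  rcases eq_or_ne l.im 0 with h | h
  · left
    have : (l^2 + (ν:ℂ)^2).re = l.re^2 + ν^2 := by
      simp [Complex.add_re, pow_two, Complex.mul_re, h]
    rw [this]
    have : l.re * l.re > 0 := mul_pos_of_neg_of_neg hl hl
    nlinarith [sq_nonneg ν]
  · right
    show (l^2 + (ν:ℂ)^2).im ≠ 0
    have : (l^2 + (ν:ℂ)^2).im = 2 * l.re * l.im := by
      simp [Complex.add_im, pow_two, Complex.mul_im]
      ring
    rw [this]
    exact mul_ne_zero (mul_ne_zero two_ne_zero (ne_of_lt hl)) h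

end Aux

section Deriv
variable {l : ℂ}

lemma hasDerivF (hl : l.re < 0) (ν : ℝ) :
    HasDerivAt (fun t : ℝ => -(catan ((t:ℂ)/l)) - Complex.I/2 * Complex.log (l^2 + (t:ℂ)^2))
      ((Complex.I * ν - l)⁻¹) ν := by
  have h0 : HasDerivAt (fun t : ℝ => (t : ℂ)) 1 ν := by
    simpa using (hasDerivAt_id ν).ofReal_comp
  have hg1 : HasDerivAt (fun t : ℝ => 1 + Complex.I * (t:ℂ) / l) (Complex.I / l) ν := by
    simpa using (((h0.const_mul Complex.I).div_const l).const_add 1)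
  have hg2 : HasDerivAt (fun t : ℝ => 1 - Complex.I * (t:ℂ) / l) (-(Complex.I / l)) ν := by
    simpa using (((h0.const_mul Complex.I).div_const l).const_sub 1)
  have hlog1 : HasDerivAt (fun t : ℝ => Complex.log (1 + Complex.I * (t:ℂ) / l))
      ((1 + Complex.I * (ν:ℂ) / l)⁻¹ * (Complex.I / l)) ν :=
    (Complex.hasDerivAt_log (onePlus_mem hl ν)).comp (h₂ := Complex.log) ν hg1
  have hlog2 : HasDerivAt (fun t : ℝ => Complex.log (1 - Complex.I * (t:ℂ) / l))
      ((1 - Complex.I * (ν:ℂ) / l)⁻¹ * (-(Complex.I / l))) ν :=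
    (Complex.hasDerivAt_log (oneSub_mem hl ν)).comp (h₂ := Complex.log) ν hg2
  have hsq : HasDerivAt (fun t : ℝ => l^2 + (t:ℂ)^2) (2 * ν) ν := by
    have h := (h0.mul h0).const_add (l^2)
    convert h using 1
    · rfl
    · funext t; simp only [Pi.mul_apply]; ring
    · ring
  have hlogsq : HasDerivAt (fun t : ℝ => Complex.log (l^2 + (t:ℂ)^2))
      ((l^2 + (ν:ℂ)^2)⁻¹ * (2 * ν)) ν :=
    (Complex.hasDerivAt_log (sqadd_mem hl ν)).comp (h₂ := Complex.log) ν hsq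
  have hF : HasDerivAt
      (fun t : ℝ => -((1 / (2*Complex.I)) * (Complex.log (1 + Complex.I * (t:ℂ) / l)
          - Complex.log (1 - Complex.I * (t:ℂ) / l)))
        - Complex.I/2 * Complex.log (l^2 + (t:ℂ)^2))
      (-((1 / (2*Complex.I)) * ((1 + Complex.I * (ν:ℂ) / l)⁻¹ * (Complex.I / l)
          - (1 - Complex.I * (ν:ℂ) / l)⁻¹ * (-(Complex.I / l))))
        - Complex.I/2 * ((l^2 + (ν:ℂ)^2)⁻¹ * (2 * ν))) ν :=
    (((hlog1.sub hlog2).const_mul (1 / (2*Complex.I))).neg).sub (hlogsq.const_mul (Complex.I/2))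
  have heq : (fun t : ℝ => -((1 / (2*Complex.I)) * (Complex.log (1 + Complex.I * (t:ℂ) / l)
          - Complex.log (1 - Complex.I * (t:ℂ) / l)))
        - Complex.I/2 * Complex.log (l^2 + (t:ℂ)^2))
      = (fun t : ℝ => -(catan ((t:ℂ)/l)) - Complex.I/2 * Complex.log (l^2 + (t:ℂ)^2)) := by
    funext t
    simp only [catan, mul_div_assoc]
  rw [heq] at hF
  convert hF using 1
  have h1 := onePlusne hl ν
  have h2 := oneSubne hl ν
  have h3 := sqaddne hl ν
  have h4 := subIne hl ν
  have h5 := lne hl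
  have h6 : l + Complex.I * (ν:ℂ) ≠ 0 := addIne hl ν
  have e1 : 1 + Complex.I * (ν:ℂ) / l = (l + Complex.I * (ν:ℂ))/l := by
    rw [add_div, div_self h5]
  have h7 : l - Complex.I * (ν:ℂ) ≠ 0 := by
    simpa [mul_neg, ← sub_eq_add_neg] using addIne hl (-ν)
  have e2 : 1 - Complex.I * (ν:ℂ) / l = (l - Complex.I * (ν:ℂ))/l := by
    rw [sub_div, div_self h5]
  rw [e1, e2]
  have hI2 : (Complex.I)^2 = -1 := Complex.I_sq
  have hI3 : (Complex.I)^3 = -Complex.I := by rw [pow_succ, hI2]; ring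
  have hI4 : (Complex.I)^4 = 1 := by rw [show (4:ℕ)=2+2 by rfl, pow_add, hI2]; ring
  have hI5 : (Complex.I)^5 = Complex.I := by rw [pow_succ, hI4]; ring
  field_simp
  ring_nf
  simp only [hI2, hI3, hI4, hI5]
  have hD : (l ^ 2 * Complex.I * (ν:ℂ) ^ 4 * 4 + l ^ 4 * Complex.I * (ν:ℂ) ^ 2 * 8 + l ^ 6 * Complex.I * 4) ≠ 0 := by
    rw [show (l ^ 2 * Complex.I * (ν:ℂ) ^ 4 * 4 + l ^ 4 * Complex.I * (ν:ℂ) ^ 2 * 8 + l ^ 6 * Complex.I * 4)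
        = Complex.I * l^2 * (l^2+(ν:ℂ)^2)^2 * 4 by ring]
    exact mul_ne_zero (mul_ne_zero (mul_ne_zero Complex.I_ne_zero (pow_ne_zero 2 h5)) (pow_ne_zero 2 h3)) (by norm_num : (4:ℂ) ≠ 0)
  rw [← mul_inv_cancel₀ hD]
  ring
end Deriv

lemma catan_neg (z : ℂ) : catan (-z) = -catan z := by
  simp only [catan]
  rw [show 1 + Complex.I * -z = 1 - Complex.I * z by ring,
      show 1 - Complex.I * -z = 1 + Complex.I * z by ring]
  ring

section Integrals
variable {l li lk : ℂ}

lemma contInv (hl : l.re < 0) : Continuous (fun ν : ℝ => (Complex.I * (ν:ℂ) - l)⁻¹) :=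
  ((continuous_const.mul Complex.continuous_ofReal).sub continuous_const).inv₀
    (fun ν => subIne hl ν)

lemma contInv' (hl : l.re < 0) : Continuous (fun ν : ℝ => (-(Complex.I * (ν:ℂ)) - l)⁻¹) :=
  (((continuous_const.mul Complex.continuous_ofReal).neg).sub continuous_const).inv₀
    (fun ν => by
      show -(Complex.I * (ν:ℂ)) - l ≠ 0
      rw [show -(Complex.I * (ν:ℂ)) - l = -(l + Complex.I * (ν:ℂ)) by ring]
      exact neg_ne_zero.mpr (addIne hl ν))

lemma integral1 (hl : l.re < 0) (ω : ℝ) :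
    ∫ ν in (-ω)..ω, (Complex.I * (ν:ℂ) - l)⁻¹ = -2 * catan ((ω:ℂ)/l) := by
  rw [intervalIntegral.integral_eq_sub_of_hasDerivAt
    (f := fun t : ℝ => -(catan ((t:ℂ)/l)) - Complex.I/2 * Complex.log (l^2 + (t:ℂ)^2))
    (fun x _ => hasDerivF hl x) ((contInv hl).intervalIntegrable _ _)]
  push_cast
  rw [show (-(ω:ℂ))^2 = (ω:ℂ)^2 by ring, show (-(ω:ℂ))/l = -((ω:ℂ)/l) by ring, catan_neg]
  ring

lemma integral2 (hl : l.re < 0) (ω : ℝ) :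
    ∫ ν in (-ω)..ω, (-(Complex.I * (ν:ℂ)) - l)⁻¹ = -2 * catan ((ω:ℂ)/l) := by
  have h : (fun ν : ℝ => (-(Complex.I * (ν:ℂ)) - l)⁻¹)
      = (fun ν : ℝ => (Complex.I * ((-ν : ℝ):ℂ) - l)⁻¹) := by
    funext ν; push_cast; ring_nf
  rw [h, intervalIntegral.integral_comp_neg (fun ν : ℝ => (Complex.I * (ν:ℂ) - l)⁻¹), neg_neg]
  exact integral1 hl ω

lemma integral3 (hi : li.re < 0) (hk : lk.re < 0) (ω : ℝ) :
    ∫ ν in (-ω)..ω, (Complex.I * (ν:ℂ) - li)⁻¹ * (-(Complex.I * (ν:ℂ)) - lk)⁻¹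
      = (-2 * catan ((ω:ℂ)/li) + -2 * catan ((ω:ℂ)/lk)) * (-li - lk)⁻¹ := by
  have hD : -li - lk ≠ 0 := by
    intro h
    have : (-li - lk).re = 0 := by rw [h]; simp
    simp [Complex.sub_re, Complex.neg_re] at this
    linarith
  have hpt : ∀ ν : ℝ, (Complex.I * (ν:ℂ) - li)⁻¹ * (-(Complex.I * (ν:ℂ)) - lk)⁻¹
      = ((Complex.I * (ν:ℂ) - li)⁻¹ + (-(Complex.I * (ν:ℂ)) - lk)⁻¹) * (-li - lk)⁻¹ := by
    intro ν
    have h1 := subIne hi ν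
    have h2 : -(Complex.I * (ν:ℂ)) - lk ≠ 0 := by
      rw [show -(Complex.I * (ν:ℂ)) - lk = -(lk + Complex.I * (ν:ℂ)) by ring]
      exact neg_ne_zero.mpr (addIne hk ν)
    field_simp
    ring
  simp only [hpt]
  rw [intervalIntegral.integral_mul_const, intervalIntegral.integral_add
    ((contInv hi).intervalIntegrable _ _) ((contInv' hk).intervalIntegrable _ _),
    integral1 hi ω, integral2 hk ω]
end Integrals

lemma expand_sum {ι κ : Type*} [Fintype ι] [Fintype κ] (d : κ → ℂ) (φ : ι → κ → ℂ)
    (u v : ι → ℂ) :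
    ∑ ab, (d ab + ∑ i, u i * φ i ab) * (d ab + ∑ i, v i * φ i ab)
      = ∑ ab, d ab * d ab
        + ∑ i, u i * (∑ ab, φ i ab * d ab)
        + ∑ i, v i * (∑ ab, φ i ab * d ab)
        + ∑ i, ∑ k, u i * v k * (∑ ab, φ i ab * φ k ab) := by
  have h1 : ∀ ab : κ, (d ab + ∑ i, u i * φ i ab) * (d ab + ∑ i, v i * φ i ab)
      = d ab * d ab + (∑ i, u i * (φ i ab * d ab)) + (∑ i, v i * (φ i ab * d ab))
        + ∑ i, ∑ k, u i * v k * (φ i ab * φ k ab) := by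
    intro ab
    have e1 : ∑ i, u i * (φ i ab * d ab) = (∑ i, u i * φ i ab) * d ab := by
      rw [Finset.sum_mul]; exact Finset.sum_congr rfl fun i _ => by ring
    have e2 : ∑ i, v i * (φ i ab * d ab) = d ab * (∑ i, v i * φ i ab) := by
      rw [Finset.mul_sum]; exact Finset.sum_congr rfl fun i _ => by ring
    have e3 : ∑ i, ∑ k, u i * v k * (φ i ab * φ k ab)
        = (∑ i, u i * φ i ab) * (∑ k, v k * φ k ab) := by
      rw [Finset.sum_mul_sum]
      exact Finset.sum_congr rfl fun i _ => Finset.sum_congr rfl fun k _ => by ring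
    rw [e1, e2, e3]; ring
  simp only [h1, Finset.sum_add_distrib]
  congr 1
  · congr 1
    · congr 1
      rw [Finset.sum_comm]
      exact Finset.sum_congr rfl fun i _ => by rw [Finset.mul_sum]
    · rw [Finset.sum_comm]
      exact Finset.sum_congr rfl fun i _ => by rw [Finset.mul_sum]
  · rw [Finset.sum_comm]
    refine Finset.sum_congr rfl fun i _ => ?_
    rw [Finset.sum_comm]
    exact Finset.sum_congr rfl fun k _ => by rw [Finset.mul_sum]

lemma frobSq_cast {p m : ℕ} (M : Matrix (Fin p) (Fin m) ℂ) :
    ((frobSq M : ℝ) : ℂ) = ∑ a, ∑ b, M a b * (starRingEnd ℂ) (M a b) := by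
  simp only [frobSq]
  push_cast
  refine Finset.sum_congr rfl fun a _ => Finset.sum_congr rfl fun b _ => ?_
  rw [Complex.mul_conj, ← Complex.sq_norm]
  push_cast
  ring

lemma trace_mul_t {p m : ℕ} (A B : Matrix (Fin p) (Fin m) ℂ) :
    (A * Bᵀ).trace = ∑ a, ∑ b, A a b * B a b := by
  simp [Matrix.trace, Matrix.mul_apply, Matrix.diag, Matrix.transpose_apply]

lemma keylem (n p m : ℕ) (lam : Fin n → ℂ)
    (Φ : Fin n → Matrix (Fin p) (Fin m) ℂ)
    (σ : Fin n → Fin n) (hsigsig : σ ∘ σ = id)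
    (hsiglam : ∀ i, lam (σ i) = (starRingEnd ℂ) (lam i))
    (hsigPhi : ∀ i, Φ (σ i) = (Φ i).map (starRingEnd ℂ))
    (α : Fin n → ℝ) (hα : ∀ i, α (σ i) = α i)
    (De : Matrix (Fin p) (Fin m) ℝ) (ν : ℝ) :
    ((frobSq (De.map (fun x => (x : ℂ)) +
        ∑ i, (1 - α i) • ((Complex.I * (ν : ℂ) - lam i)⁻¹ • Φ i)) : ℝ) : ℂ)
    = ((frobSq (De.map (fun x => (x : ℂ))) : ℝ) : ℂ)
      + ∑ i, ((1 - α i : ℝ):ℂ) * (Φ i * (De.map (fun x => (x:ℂ)))ᵀ).trace *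
          (Complex.I * (ν:ℂ) - lam i)⁻¹
      + ∑ i, ((1 - α i : ℝ):ℂ) * (Φ i * (De.map (fun x => (x:ℂ)))ᵀ).trace *
          (-(Complex.I * (ν:ℂ)) - lam i)⁻¹
      + ∑ i, ∑ k, ((1 - α i : ℝ):ℂ) * ((1 - α k : ℝ):ℂ) * (Φ i * (Φ k)ᵀ).trace *
          ((Complex.I * (ν:ℂ) - lam i)⁻¹ * (-(Complex.I * (ν:ℂ)) - lam k)⁻¹) := by
  have hinv : Function.Involutive σ := fun x => congrFun hsigsig x
  set Dc : Matrix (Fin p) (Fin m) ℂ := De.map (fun x => (x : ℂ)) with hDc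
  have hDcr : ∀ a b, (starRingEnd ℂ) (Dc a b) = Dc a b := by
    intro a b
    simp [hDc, Matrix.map_apply, Complex.conj_ofReal]
  have entry : ∀ a b, (Dc + ∑ i, (1 - α i) • ((Complex.I * (ν:ℂ) - lam i)⁻¹ • Φ i)) a b
      = Dc a b + ∑ i, (((1 - α i : ℝ):ℂ) * (Complex.I * (ν:ℂ) - lam i)⁻¹) * Φ i a b := by
    intro a b
    simp [Matrix.add_apply, Matrix.sum_apply, Matrix.smul_apply, Complex.real_smul,
      mul_assoc]
  have term : ∀ a b i, (starRingEnd ℂ) ((((1 - α i : ℝ):ℂ) * (Complex.I * (ν:ℂ) - lam i)⁻¹) * Φ i a b)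
      = (((1 - α (σ i) : ℝ):ℂ) * (-(Complex.I * (ν:ℂ)) - lam (σ i))⁻¹) * Φ (σ i) a b := by
    intro a b i
    simp only [_root_.map_mul, map_inv₀, map_sub, Complex.conj_I, Complex.conj_ofReal,
      hsigPhi, Matrix.map_apply, ← hsiglam, hα, neg_mul]
  have conjentry : ∀ a b, (starRingEnd ℂ)
        (Dc a b + ∑ i, (((1 - α i : ℝ):ℂ) * (Complex.I * (ν:ℂ) - lam i)⁻¹) * Φ i a b)
      = Dc a b + ∑ i, (((1 - α i : ℝ):ℂ) * (-(Complex.I * (ν:ℂ)) - lam i)⁻¹) * Φ i a b := by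
    intro a b
    rw [map_add, map_sum, hDcr]
    congr 1
    calc ∑ i, (starRingEnd ℂ) ((((1 - α i : ℝ):ℂ) * (Complex.I * (ν:ℂ) - lam i)⁻¹) * Φ i a b)
        = ∑ i, (((1 - α (σ i) : ℝ):ℂ) * (-(Complex.I * (ν:ℂ)) - lam (σ i))⁻¹) * Φ (σ i) a b :=
          Finset.sum_congr rfl fun i _ => term a b i
      _ = ∑ i, (((1 - α i : ℝ):ℂ) * (-(Complex.I * (ν:ℂ)) - lam i)⁻¹) * Φ i a b :=
          Equiv.sum_comp hinv.toPerm
            (fun j => (((1 - α j : ℝ):ℂ) * (-(Complex.I * (ν:ℂ)) - lam j)⁻¹) * Φ j a b)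
  rw [frobSq_cast, frobSq_cast]
  have E := expand_sum (κ := Fin p × Fin m) (fun ab => Dc ab.1 ab.2)
    (fun i ab => Φ i ab.1 ab.2)
    (fun i => ((1 - α i : ℝ):ℂ) * (Complex.I * (ν:ℂ) - lam i)⁻¹)
    (fun i => ((1 - α i : ℝ):ℂ) * (-(Complex.I * (ν:ℂ)) - lam i)⁻¹)
  simp only [Fintype.sum_prod_type] at E
  calc ∑ a, ∑ b, (Dc + ∑ i, (1 - α i) • ((Complex.I * (ν:ℂ) - lam i)⁻¹ • Φ i)) a b *
          (starRingEnd ℂ) ((Dc + ∑ i, (1 - α i) • ((Complex.I * (ν:ℂ) - lam i)⁻¹ • Φ i)) a b)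
      = ∑ a, ∑ b, (Dc a b + ∑ i, (((1 - α i : ℝ):ℂ) * (Complex.I * (ν:ℂ) - lam i)⁻¹) * Φ i a b) *
          (Dc a b + ∑ i, (((1 - α i : ℝ):ℂ) * (-(Complex.I * (ν:ℂ)) - lam i)⁻¹) * Φ i a b) := by
        refine Finset.sum_congr rfl fun a _ => Finset.sum_congr rfl fun b _ => ?_
        rw [entry, conjentry]
    _ = ∑ a, ∑ b, Dc a b * Dc a b
        + ∑ i, (((1 - α i : ℝ):ℂ) * (Complex.I * (ν:ℂ) - lam i)⁻¹) * (∑ a, ∑ b, Φ i a b * Dc a b)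
        + ∑ i, (((1 - α i : ℝ):ℂ) * (-(Complex.I * (ν:ℂ)) - lam i)⁻¹) * (∑ a, ∑ b, Φ i a b * Dc a b)
        + ∑ i, ∑ k, (((1 - α i : ℝ):ℂ) * (Complex.I * (ν:ℂ) - lam i)⁻¹) *
            ((((1 - α k : ℝ):ℂ) * (-(Complex.I * (ν:ℂ)) - lam k)⁻¹)) * (∑ a, ∑ b, Φ i a b * Φ k a b) := E
    _ = _ := by
        simp only [trace_mul_t]
        congr 1
        · congr 1
          · congr 1
            · exact Finset.sum_congr rfl fun a _ => Finset.sum_congr rfl fun b _ => by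
                rw [hDcr]
            · exact Finset.sum_congr rfl fun i _ => by ring
          · exact Finset.sum_congr rfl fun i _ => by ring
        · exact Finset.sum_congr rfl fun i _ => Finset.sum_congr rfl fun k _ => by ring


set_option maxHeartbeats 2000000 in
theorem optimal_freq_limited_H2_modal_truncation_error_decomposition
    (n p m : ℕ) (lam : Fin n → ℂ) (hlam : ∀ i, (lam i).re < 0)
    (Φ : Fin n → Matrix (Fin p) (Fin m) ℂ)
    (σ : Fin n → Fin n) (hsigsig : σ ∘ σ = id)
    (hsiglam : ∀ i, lam (σ i) = (starRingEnd ℂ) (lam i))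
    (hsigPhi : ∀ i, Φ (σ i) = (Φ i).map (starRingEnd ℂ))
    (α : Fin n → ℝ) (hα : ∀ i, α (σ i) = α i)
    (De : Matrix (Fin p) (Fin m) ℝ) (ω : ℝ) (hω : 0 < ω) :
    ((((1 : ℝ) / (2 * Real.pi)) *
        ∫ ν in (-ω)..ω,
          frobSq (De.map (fun x => (x : ℂ)) +
            ∑ i, (1 - α i) • ((Complex.I * (ν : ℂ) - lam i)⁻¹ • Φ i)) : ℝ) : ℂ) =
      ((ω / Real.pi : ℝ) : ℂ) * ((frobSq (De.map (fun x => (x : ℂ))) : ℝ) : ℂ) -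
        ((2 / Real.pi : ℝ) : ℂ) *
          ∑ i, ((1 - α i : ℝ) : ℂ) *
            (Φ i * (De.map (fun x => (x : ℂ)))ᵀ).trace * catan ((ω : ℂ) / lam i) -
        ((2 / Real.pi : ℝ) : ℂ) *
          ∑ i, ∑ k, ((1 - α i : ℝ) : ℂ) * ((1 - α k : ℝ) : ℂ) *
            (Φ i * (Φ k)ᵀ).trace * catan ((ω : ℂ) / lam i) / (-lam i - lam k) := by
  have hπ : (Real.pi : ℂ) ≠ 0 := Complex.ofReal_ne_zero.mpr Real.pi_ne_zero
  rw [Complex.ofReal_mul, ← intervalIntegral.integral_ofReal]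
  simp only [keylem n p m lam Φ σ hsigsig hsiglam hsigPhi α hα De]
  -- integrability facts
  have hcont1 : ∀ i : Fin n, Continuous
      (fun ν : ℝ => ((1 - α i : ℝ):ℂ) * (Φ i * (De.map (fun x => (x:ℂ)))ᵀ).trace *
        (Complex.I * (ν:ℂ) - lam i)⁻¹) :=
    fun i => continuous_const.mul (contInv (hlam i))
  have hcont2 : ∀ i : Fin n, Continuous
      (fun ν : ℝ => ((1 - α i : ℝ):ℂ) * (Φ i * (De.map (fun x => (x:ℂ)))ᵀ).trace *
        (-(Complex.I * (ν:ℂ)) - lam i)⁻¹) :=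
    fun i => continuous_const.mul (contInv' (hlam i))
  have hcont3 : ∀ (i k : Fin n), Continuous
      (fun ν : ℝ => ((1 - α i : ℝ):ℂ) * ((1 - α k : ℝ):ℂ) * (Φ i * (Φ k)ᵀ).trace *
        ((Complex.I * (ν:ℂ) - lam i)⁻¹ * (-(Complex.I * (ν:ℂ)) - lam k)⁻¹)) :=
    fun i k => continuous_const.mul ((contInv (hlam i)).mul (contInv' (hlam k)))
  have hint1 : ∀ i : Fin n, IntervalIntegrable
      (fun ν : ℝ => ((1 - α i : ℝ):ℂ) * (Φ i * (De.map (fun x => (x:ℂ)))ᵀ).trace *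
        (Complex.I * (ν:ℂ) - lam i)⁻¹) MeasureTheory.volume (-ω) ω :=
    fun i => (hcont1 i).intervalIntegrable _ _
  have hint2 : ∀ i : Fin n, IntervalIntegrable
      (fun ν : ℝ => ((1 - α i : ℝ):ℂ) * (Φ i * (De.map (fun x => (x:ℂ)))ᵀ).trace *
        (-(Complex.I * (ν:ℂ)) - lam i)⁻¹) MeasureTheory.volume (-ω) ω :=
    fun i => (hcont2 i).intervalIntegrable _ _
  have hint3 : ∀ (i k : Fin n), IntervalIntegrable
      (fun ν : ℝ => ((1 - α i : ℝ):ℂ) * ((1 - α k : ℝ):ℂ) * (Φ i * (Φ k)ᵀ).trace *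
        ((Complex.I * (ν:ℂ) - lam i)⁻¹ * (-(Complex.I * (ν:ℂ)) - lam k)⁻¹))
      MeasureTheory.volume (-ω) ω :=
    fun i k => (hcont3 i k).intervalIntegrable _ _
  have hS1 : IntervalIntegrable (fun ν : ℝ => ∑ i, ((1 - α i : ℝ):ℂ) *
      (Φ i * (De.map (fun x => (x:ℂ)))ᵀ).trace * (Complex.I * (ν:ℂ) - lam i)⁻¹)
      MeasureTheory.volume (-ω) ω :=
    (continuous_finset_sum Finset.univ (fun i _ => hcont1 i)).intervalIntegrable _ _
  have hS2 : IntervalIntegrable (fun ν : ℝ => ∑ i, ((1 - α i : ℝ):ℂ) *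
      (Φ i * (De.map (fun x => (x:ℂ)))ᵀ).trace * (-(Complex.I * (ν:ℂ)) - lam i)⁻¹)
      MeasureTheory.volume (-ω) ω :=
    (continuous_finset_sum Finset.univ (fun i _ => hcont2 i)).intervalIntegrable _ _
  have hS3 : IntervalIntegrable (fun ν : ℝ => ∑ i, ∑ k, ((1 - α i : ℝ):ℂ) *
      ((1 - α k : ℝ):ℂ) * (Φ i * (Φ k)ᵀ).trace *
      ((Complex.I * (ν:ℂ) - lam i)⁻¹ * (-(Complex.I * (ν:ℂ)) - lam k)⁻¹))
      MeasureTheory.volume (-ω) ω :=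
    (continuous_finset_sum Finset.univ (fun i _ =>
      continuous_finset_sum Finset.univ (fun k _ => hcont3 i k))).intervalIntegrable _ _
  rw [intervalIntegral.integral_add (((intervalIntegrable_const).add hS1).add hS2) hS3,
      intervalIntegral.integral_add ((intervalIntegrable_const).add hS1) hS2,
      intervalIntegral.integral_add (intervalIntegrable_const) hS1,
      intervalIntegral.integral_const]
  rw [intervalIntegral.integral_finset_sum (fun i _ => hint1 i),
      intervalIntegral.integral_finset_sum (fun i _ => hint2 i),
      intervalIntegral.integral_finset_sum (fun i _ =>
        (continuous_finset_sum Finset.univ (fun k _ => hcont3 i k)).intervalIntegrable (-ω) ω)]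
  have cal1 : ∀ i : Fin n, (∫ ν in (-ω)..ω, ((1 - α i : ℝ):ℂ) *
      (Φ i * (De.map (fun x => (x:ℂ)))ᵀ).trace * (Complex.I * (ν:ℂ) - lam i)⁻¹)
      = ((1 - α i : ℝ):ℂ) * (Φ i * (De.map (fun x => (x:ℂ)))ᵀ).trace *
        (-2 * catan ((ω:ℂ)/lam i)) := by
    intro i
    rw [intervalIntegral.integral_const_mul, integral1 (hlam i) ω]
  have cal2 : ∀ i : Fin n, (∫ ν in (-ω)..ω, ((1 - α i : ℝ):ℂ) *
      (Φ i * (De.map (fun x => (x:ℂ)))ᵀ).trace * (-(Complex.I * (ν:ℂ)) - lam i)⁻¹)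
      = ((1 - α i : ℝ):ℂ) * (Φ i * (De.map (fun x => (x:ℂ)))ᵀ).trace *
        (-2 * catan ((ω:ℂ)/lam i)) := by
    intro i
    rw [intervalIntegral.integral_const_mul, integral2 (hlam i) ω]
  have cal3 : ∀ i k : Fin n, (∫ ν in (-ω)..ω, ((1 - α i : ℝ):ℂ) * ((1 - α k : ℝ):ℂ) *
      (Φ i * (Φ k)ᵀ).trace *
      ((Complex.I * (ν:ℂ) - lam i)⁻¹ * (-(Complex.I * (ν:ℂ)) - lam k)⁻¹))
      = ((1 - α i : ℝ):ℂ) * ((1 - α k : ℝ):ℂ) * (Φ i * (Φ k)ᵀ).trace *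
        ((-2 * catan ((ω:ℂ)/lam i) + -2 * catan ((ω:ℂ)/lam k)) * (-lam i - lam k)⁻¹) := by
    intro i k
    rw [intervalIntegral.integral_const_mul, integral3 (hlam i) (hlam k) ω]
  have cal3' : ∀ i : Fin n, (∫ ν in (-ω)..ω, ∑ k, ((1 - α i : ℝ):ℂ) * ((1 - α k : ℝ):ℂ) *
      (Φ i * (Φ k)ᵀ).trace *
      ((Complex.I * (ν:ℂ) - lam i)⁻¹ * (-(Complex.I * (ν:ℂ)) - lam k)⁻¹))
      = ∑ k, ((1 - α i : ℝ):ℂ) * ((1 - α k : ℝ):ℂ) * (Φ i * (Φ k)ᵀ).trace *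
        ((-2 * catan ((ω:ℂ)/lam i) + -2 * catan ((ω:ℂ)/lam k)) * (-lam i - lam k)⁻¹) := by
    intro i
    rw [intervalIntegral.integral_finset_sum (fun k _ => hint3 i k)]
    exact Finset.sum_congr rfl fun k _ => cal3 i k
  simp only [cal1, cal2, cal3']
  -- now pure algebra
  have Tsym : ∀ i k : Fin n, (Φ i * (Φ k)ᵀ).trace = (Φ k * (Φ i)ᵀ).trace := by
    intro i k
    rw [trace_mul_t, trace_mul_t]
    refine Finset.sum_congr rfl fun a _ => Finset.sum_congr rfl fun b _ => mul_comm _ _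
  rw [sub_neg_eq_add, Complex.real_smul, Complex.ofReal_add]
  rw [show ((1/(2*Real.pi):ℝ):ℂ) = 1/(2*(Real.pi:ℂ)) by push_cast; ring]
  rw [show ((ω/Real.pi:ℝ):ℂ) = (ω:ℂ)/(Real.pi:ℂ) by push_cast; ring]
  rw [show ((2/Real.pi:ℝ):ℂ) = 2/(Real.pi:ℂ) by push_cast; ring]
  set F0 : ℂ := ((frobSq (De.map (fun x => (x : ℂ))) : ℝ) : ℂ) with hF0
  set B : Fin n → ℂ := fun i => ((1 - α i : ℝ):ℂ) *
    (Φ i * (De.map (fun x => (x:ℂ)))ᵀ).trace * (-2 * catan ((ω:ℂ)/lam i)) with hB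
  have hpi2 : 1/(2*(Real.pi:ℂ)) = 1/2 * (1/(Real.pi:ℂ)) := by
    rw [one_div, mul_inv]; ring
  have H1 : 1/(2*(Real.pi:ℂ)) * (((ω:ℂ) + (ω:ℂ)) * F0) = (ω:ℂ)/(Real.pi:ℂ) * F0 := by
    rw [hpi2]; ring
  have H2 : 1/(2*(Real.pi:ℂ)) * (∑ i, B i) + 1/(2*(Real.pi:ℂ)) * (∑ i, B i)
      = -(2/(Real.pi:ℂ) * ∑ i, ((1 - α i : ℝ):ℂ) *
          (Φ i * (De.map (fun x => (x:ℂ)))ᵀ).trace * catan ((ω:ℂ) / lam i)) := by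
    simp only [Finset.mul_sum]
    rw [← Finset.sum_add_distrib, ← Finset.sum_neg_distrib]
    refine Finset.sum_congr rfl fun i _ => ?_
    simp only [hB]
    rw [hpi2]
    ring
  have H3 : 1/(2*(Real.pi:ℂ)) * (∑ i, ∑ k, ((1 - α i : ℝ):ℂ) * ((1 - α k : ℝ):ℂ) *
        (Φ i * (Φ k)ᵀ).trace *
        ((-2 * catan ((ω:ℂ)/lam i) + -2 * catan ((ω:ℂ)/lam k)) * (-lam i - lam k)⁻¹))
      = -(2/(Real.pi:ℂ) * ∑ i, ∑ k, ((1 - α i : ℝ):ℂ) * ((1 - α k : ℝ):ℂ) *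
          (Φ i * (Φ k)ᵀ).trace * catan ((ω:ℂ) / lam i) / (-lam i - lam k)) := by
    apply mul_left_cancel₀ (two_ne_zero (α := ℂ))
    calc (2:ℂ) * (1/(2*(Real.pi:ℂ)) * (∑ i, ∑ k, ((1 - α i : ℝ):ℂ) * ((1 - α k : ℝ):ℂ) *
            (Φ i * (Φ k)ᵀ).trace *
            ((-2 * catan ((ω:ℂ)/lam i) + -2 * catan ((ω:ℂ)/lam k)) * (-lam i - lam k)⁻¹)))
        = ∑ i, ∑ k, (-(2/(Real.pi:ℂ) * (((1 - α i : ℝ):ℂ) * ((1 - α k : ℝ):ℂ) *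
            (Φ i * (Φ k)ᵀ).trace * catan ((ω:ℂ) / lam i) / (-lam i - lam k)))
          + -(2/(Real.pi:ℂ) * (((1 - α i : ℝ):ℂ) * ((1 - α k : ℝ):ℂ) *
            (Φ i * (Φ k)ᵀ).trace * catan ((ω:ℂ) / lam k) / (-lam i - lam k)))) := by
          rw [Finset.mul_sum, Finset.mul_sum]
          refine Finset.sum_congr rfl fun i _ => ?_
          rw [Finset.mul_sum, Finset.mul_sum]
          refine Finset.sum_congr rfl fun k _ => ?_
          rw [hpi2]
          ring
      _ = (∑ i, ∑ k, -(2/(Real.pi:ℂ) * (((1 - α i : ℝ):ℂ) * ((1 - α k : ℝ):ℂ) *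
            (Φ i * (Φ k)ᵀ).trace * catan ((ω:ℂ) / lam i) / (-lam i - lam k))))
          + ∑ i, ∑ k, -(2/(Real.pi:ℂ) * (((1 - α i : ℝ):ℂ) * ((1 - α k : ℝ):ℂ) *
            (Φ i * (Φ k)ᵀ).trace * catan ((ω:ℂ) / lam k) / (-lam i - lam k))) := by
          rw [← Finset.sum_add_distrib]
          exact Finset.sum_congr rfl fun i _ => by rw [← Finset.sum_add_distrib]
      _ = (∑ i, ∑ k, -(2/(Real.pi:ℂ) * (((1 - α i : ℝ):ℂ) * ((1 - α k : ℝ):ℂ) *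
            (Φ i * (Φ k)ᵀ).trace * catan ((ω:ℂ) / lam i) / (-lam i - lam k))))
          + ∑ i, ∑ k, -(2/(Real.pi:ℂ) * (((1 - α i : ℝ):ℂ) * ((1 - α k : ℝ):ℂ) *
            (Φ i * (Φ k)ᵀ).trace * catan ((ω:ℂ) / lam i) / (-lam i - lam k))) := by
          congr 1
          rw [Finset.sum_comm]
          refine Finset.sum_congr rfl fun i _ => Finset.sum_congr rfl fun k _ => ?_
          rw [Tsym k i, show -lam k - lam i = -lam i - lam k from by ring,
            show ((1 - α k : ℝ):ℂ) * ((1 - α i : ℝ):ℂ) = ((1 - α i : ℝ):ℂ) * ((1 - α k : ℝ):ℂ) from by ring]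
      _ = 2 * -(2/(Real.pi:ℂ) * ∑ i, ∑ k, ((1 - α i : ℝ):ℂ) * ((1 - α k : ℝ):ℂ) *
            (Φ i * (Φ k)ᵀ).trace * catan ((ω:ℂ) / lam i) / (-lam i - lam k)) := by
          rw [← two_mul]
          congr 1
          simp only [Finset.mul_sum]
          rw [← Finset.sum_neg_distrib]
          refine Finset.sum_congr rfl fun i _ => ?_
          rw [← Finset.sum_neg_distrib]
  rw [mul_add, mul_add, mul_add]
  linear_combination H1 + H2 + H3
end

section
/- Let n, p, m be natural numbers, let λ : Fin n → ℂ satisfy Re(λ i) < 0 for all i, and let Φ : Fin n → Matrix (Fin p) (Fin m) ℂ. Then the H₂-norm squared of H(s) = ∑ᵢ Φᵢ/(s − λᵢ) satisfies: (1/(2π)) · ∫_{ν ∈ ℝ} ‖∑ i, (I·ν − λ i)⁻¹ • Φ i‖_F² dν = ∑ i, ∑ k, tr(Φ i · (Φ k)ᴴ) / (−λ i − conj(λ k)), where the double sum on the right is a real number (i.e., the complex double sum equals the coercion of the real-valued integral on the left). -/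
open MeasureTheory Complex Matrix Filter Topology

lemma denom_ne {a : ℂ} (ha : a.re < 0) (ν : ℝ) : Complex.I * ν - a ≠ 0 := by
  intro h
  have h2 : (Complex.I * ν - a).re = 0 := by rw [h]; simp
  simp [Complex.sub_re, Complex.mul_re] at h2
  linarith

lemma normSq_denom (a : ℂ) (ν : ℝ) :
    Complex.normSq (Complex.I * ν - a) = a.re ^ 2 + (ν - a.im) ^ 2 := by
  simp [Complex.normSq_apply, Complex.sub_re, Complex.sub_im, Complex.mul_re, Complex.mul_im]
  ring

lemma integrable_inv_sq_add {c : ℝ} (hc : c ≠ 0) (t : ℝ) :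
    Integrable (fun ν : ℝ => (c ^ 2 + (ν - t) ^ 2)⁻¹) := by
  have h1 : Integrable (fun x : ℝ => (1 + x ^ 2)⁻¹) := integrable_inv_one_add_sq
  have h2 : Integrable (fun x : ℝ => (1 + (c⁻¹ * x) ^ 2)⁻¹) :=
    h1.comp_mul_left' (inv_ne_zero hc)
  have h3 : Integrable (fun x : ℝ => (c ^ 2)⁻¹ * (1 + (c⁻¹ * x) ^ 2)⁻¹ ) := h2.const_mul _
  have h4 : Integrable (fun x : ℝ => (c ^ 2 + x ^ 2)⁻¹) := by
    refine h3.congr (Eventually.of_forall fun x => ?_)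
    field_simp
  exact h4.comp_sub_right t

lemma cont_g (a b : ℂ) (ha : a.re < 0) (hb : b.re < 0) :
    Continuous (fun ν : ℝ =>
      (Complex.I * ν - a)⁻¹ * (starRingEnd ℂ) ((Complex.I * ν - b)⁻¹)) := by
  have h1 : Continuous (fun ν : ℝ => Complex.I * ν - a) := by continuity
  have h2 : Continuous (fun ν : ℝ => Complex.I * ν - b) := by continuity
  exact ((h1.inv₀ (fun ν => denom_ne ha ν)).mul
    (Complex.continuous_conj.comp (h2.inv₀ (fun ν => denom_ne hb ν))))

lemma integrable_g (a b : ℂ) (ha : a.re < 0) (hb : b.re < 0) :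
    Integrable (fun ν : ℝ =>
      (Complex.I * ν - a)⁻¹ * (starRingEnd ℂ) ((Complex.I * ν - b)⁻¹)) := by
  have hbound : Integrable (fun ν : ℝ =>
      ((a.re ^ 2 + (ν - a.im) ^ 2)⁻¹ + (b.re ^ 2 + (ν - b.im) ^ 2)⁻¹) / 2) :=
    ((integrable_inv_sq_add (by intro h; rw [h] at ha; exact lt_irrefl 0 ha) a.im).add
      (integrable_inv_sq_add (by intro h; rw [h] at hb; exact lt_irrefl 0 hb) b.im)).div_const 2
  refine hbound.mono' (cont_g a b ha hb).aestronglyMeasurable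
    (Eventually.of_forall fun ν => ?_)
  set z := Complex.I * ν - a with hz
  set w := Complex.I * ν - b with hw
  have hzn : z ≠ 0 := denom_ne ha ν
  have hwn : w ≠ 0 := denom_ne hb ν
  have hab : ‖z‖ ≠ 0 := norm_ne_zero_iff.mpr hzn
  have hab2 : ‖w‖ ≠ 0 := norm_ne_zero_iff.mpr hwn
  rw [norm_mul, norm_inv, RCLike.norm_conj, norm_inv]
  have key : (‖z‖)⁻¹ * (‖w‖)⁻¹ ≤
      (((‖z‖)⁻¹) ^ 2 + ((‖w‖)⁻¹) ^ 2) / 2 := by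
    nlinarith [sq_nonneg ((‖z‖)⁻¹ - (‖w‖)⁻¹)]
  have e1 : ((‖z‖)⁻¹) ^ 2 = (a.re ^ 2 + (ν - a.im) ^ 2)⁻¹ := by
    rw [inv_pow, Complex.sq_norm, normSq_denom a ν]
  have e2 : ((‖w‖)⁻¹) ^ 2 = (b.re ^ 2 + (ν - b.im) ^ 2)⁻¹ := by
    rw [inv_pow, Complex.sq_norm, normSq_denom b ν]
  rw [e1, e2] at key
  exact key

lemma ne_of_re_pos {γ : ℂ} (hγ : 0 < γ.re) (R : ℝ) : Complex.I * R + γ ≠ 0 := by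
  intro h
  have h2 : (Complex.I * R + γ).re = 0 := by rw [h]; simp
  simp [Complex.add_re, Complex.mul_re] at h2
  linarith

lemma ne_of_re_pos' {γ : ℂ} (hγ : 0 < γ.re) (R : ℝ) : -(Complex.I * R) + γ ≠ 0 := by
  have := ne_of_re_pos hγ (-R)
  intro h; apply this; rw [← h]; push_cast; ring

lemma tendsto_logdiff {γ : ℂ} (hγ : 0 < γ.re) :
    Tendsto (fun R : ℝ => Complex.log (Complex.I * R + γ) - Complex.log (-(Complex.I * R) + γ))
      atTop (𝓝 (Real.pi * Complex.I)) := by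
  have hI : ContinuousAt Complex.log Complex.I :=
    continuousAt_clog (by right; simp)
  have hnI : ContinuousAt Complex.log (-Complex.I) :=
    continuousAt_clog (by right; simp)
  have h1 : Tendsto (fun R : ℝ => (Complex.I * R + γ) / R) atTop (𝓝 Complex.I) := by
    have hz : Tendsto (fun R : ℝ => γ * ((R : ℂ))⁻¹) atTop (𝓝 0) := by
      have : Tendsto (fun R : ℝ => ((R⁻¹ : ℝ) : ℂ)) atTop (𝓝 0) := by
        have := tendsto_inv_atTop_zero (𝕜 := ℝ)
        exact (Complex.continuous_ofReal.tendsto 0).comp (by simpa using this)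
      simpa using this.const_mul γ
    have : Tendsto (fun R : ℝ => Complex.I + γ * ((R : ℂ))⁻¹) atTop (𝓝 (Complex.I + 0)) :=
      tendsto_const_nhds.add hz
    rw [add_zero] at this
    refine this.congr' ?_
    filter_upwards [eventually_gt_atTop (0 : ℝ)] with R hR
    have hR' : (R : ℂ) ≠ 0 := by exact_mod_cast ne_of_gt hR
    field_simp
  have h2 : Tendsto (fun R : ℝ => (-(Complex.I * R) + γ) / R) atTop (𝓝 (-Complex.I)) := by
    have hz : Tendsto (fun R : ℝ => γ * ((R : ℂ))⁻¹) atTop (𝓝 0) := by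
      have : Tendsto (fun R : ℝ => ((R⁻¹ : ℝ) : ℂ)) atTop (𝓝 0) := by
        have := tendsto_inv_atTop_zero (𝕜 := ℝ)
        exact (Complex.continuous_ofReal.tendsto 0).comp (by simpa using this)
      simpa using this.const_mul γ
    have : Tendsto (fun R : ℝ => -Complex.I + γ * ((R : ℂ))⁻¹) atTop (𝓝 (-Complex.I + 0)) :=
      tendsto_const_nhds.add hz
    rw [add_zero] at this
    refine this.congr' ?_
    filter_upwards [eventually_gt_atTop (0 : ℝ)] with R hR
    have hR' : (R : ℂ) ≠ 0 := by exact_mod_cast ne_of_gt hR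
    field_simp
  have hmain : Tendsto (fun R : ℝ =>
      Complex.log ((Complex.I * R + γ) / R) - Complex.log ((-(Complex.I * R) + γ) / R))
      atTop (𝓝 (Complex.log Complex.I - Complex.log (-Complex.I))) :=
    (hI.tendsto.comp h1).sub (hnI.tendsto.comp h2)
  have heq : Complex.log Complex.I - Complex.log (-Complex.I) = Real.pi * Complex.I := by
    rw [Complex.log_I, Complex.log_neg_I]; ring
  rw [heq] at hmain
  refine hmain.congr' ?_
  filter_upwards [eventually_gt_atTop (0 : ℝ)] with R hR
  have hR' : (R : ℂ) ≠ 0 := by exact_mod_cast ne_of_gt hR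
  have e1 : Complex.I * R + γ = R * ((Complex.I * R + γ) / R) := by field_simp
  have e2 : -(Complex.I * R) + γ = R * ((-(Complex.I * R) + γ) / R) := by field_simp
  have d1 : ((Complex.I * R + γ) / R) ≠ 0 := div_ne_zero (ne_of_re_pos hγ R) hR'
  have d2 : ((-(Complex.I * R) + γ) / R) ≠ 0 := div_ne_zero (ne_of_re_pos' hγ R) hR'
  calc Complex.log ((Complex.I * R + γ) / R) - Complex.log ((-(Complex.I * R) + γ) / R)
      = (Real.log R + Complex.log ((Complex.I * R + γ) / R))
        - (Real.log R + Complex.log ((-(Complex.I * R) + γ) / R)) := by ring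
    _ = Complex.log (Complex.I * R + γ) - Complex.log (-(Complex.I * R) + γ) := by
        rw [← Complex.log_ofReal_mul hR d1, ← Complex.log_ofReal_mul hR d2, ← e1, ← e2]

lemma key_integral_s4 (a b : ℂ) (ha : a.re < 0) (hb : b.re < 0) :
    ∫ ν : ℝ, (Complex.I * ν - a)⁻¹ * (starRingEnd ℂ) ((Complex.I * ν - b)⁻¹)
      = 2 * Real.pi / (-a - (starRingEnd ℂ) b) := by
  set α : ℂ := -a with hα
  set β : ℂ := -(starRingEnd ℂ) b with hβ
  have hαre : 0 < α.re := by simp [hα]; linarith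
  have hβre : 0 < β.re := by simp [hβ, Complex.conj_re]; linarith
  have habne : α + β ≠ 0 := by
    intro h
    have h2 : (α + β).re = 0 := by rw [h]; simp
    simp [Complex.add_re] at h2
    linarith
  set g : ℝ → ℂ := fun ν => (Complex.I * ν - a)⁻¹ * (starRingEnd ℂ) ((Complex.I * ν - b)⁻¹)
    with hg
  set F : ℝ → ℂ := fun ν => (α + β)⁻¹ *
      (-Complex.I * Complex.log (Complex.I * ν + α)
        + Complex.I * Complex.log (-(Complex.I * ν) + β)) with hF
  have hderiv : ∀ ν : ℝ, HasDerivAt F (g ν) ν := by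
    intro ν
    have hbase : HasDerivAt (fun ν : ℝ => (ν : ℂ)) 1 ν := by
      simpa using (hasDerivAt_id ν).ofReal_comp
    have h1 : HasDerivAt (fun ν : ℝ => Complex.I * ν + α) Complex.I ν := by
      simpa using (hbase.const_mul Complex.I).add_const α
    have h2 : HasDerivAt (fun ν : ℝ => -(Complex.I * ν) + β) (-Complex.I) ν := by
      simpa using ((hbase.const_mul Complex.I).neg).add_const β
    have hl1 : HasDerivAt (fun ν : ℝ => Complex.log (Complex.I * ν + α))
        (Complex.I / (Complex.I * ν + α)) ν :=
      h1.clog_real (by rw [Complex.mem_slitPlane_iff]; left; simpa using hαre)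
    have hl2 : HasDerivAt (fun ν : ℝ => Complex.log (-(Complex.I * ν) + β))
        (-Complex.I / (-(Complex.I * ν) + β)) ν :=
      h2.clog_real (by rw [Complex.mem_slitPlane_iff]; left; simpa using hβre)
    have hsum := ((hl1.const_mul (-Complex.I)).add (hl2.const_mul Complex.I)).const_mul
      ((α + β)⁻¹)
    have hval : (α + β)⁻¹ * (-Complex.I * (Complex.I / (Complex.I * ν + α))
        + Complex.I * (-Complex.I / (-(Complex.I * ν) + β))) = g ν := by
      have hd1 : Complex.I * ν + α ≠ 0 := ne_of_re_pos hαre ν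
      have hd2 : -(Complex.I * ν) + β ≠ 0 := ne_of_re_pos' hβre ν
      have e1 : Complex.I * ν - a = Complex.I * ν + α := by rw [hα]; ring
      have e2 : (starRingEnd ℂ) ((Complex.I * ν - b)⁻¹) = (-(Complex.I * ν) + β)⁻¹ := by
        rw [map_inv₀, hβ]
        congr 1
        simp [Complex.conj_ofReal]
        ring
      rw [hg]
      simp only [e1, e2]
      field_simp
      ring_nf; simp only [Complex.I_sq]; ring
    rw [← hval]
    exact hsum
  have hFTC : ∀ R : ℝ, ∫ ν in (-R)..R, g ν = F R - F (-R) := fun R =>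
    intervalIntegral.integral_eq_sub_of_hasDerivAt (fun ν _ => hderiv ν)
      ((integrable_g a b ha hb).intervalIntegrable)
  have hlim1 : Tendsto (fun R : ℝ => ∫ ν in (-R)..R, g ν) atTop (𝓝 (∫ ν, g ν)) :=
    intervalIntegral_tendsto_integral (integrable_g a b ha hb)
      tendsto_neg_atTop_atBot tendsto_id
  have hlim2 : Tendsto (fun R : ℝ => F R - F (-R)) atTop
      (𝓝 ((α + β)⁻¹ * (-Complex.I * (Real.pi * Complex.I)
            + -Complex.I * (Real.pi * Complex.I)))) := by
    have T := (((tendsto_logdiff hαre).const_mul (-Complex.I)).add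
        ((tendsto_logdiff hβre).const_mul (-Complex.I))).const_mul ((α + β)⁻¹)
    refine T.congr fun R => ?_
    rw [hF]
    push_cast
    ring_nf
  have huniq : (∫ ν, g ν) = (α + β)⁻¹ * (-Complex.I * (Real.pi * Complex.I)
      + -Complex.I * (Real.pi * Complex.I)) := by
    refine tendsto_nhds_unique ?_ hlim2
    exact hlim1.congr fun R => (hFTC R)
  rw [huniq]
  have : -a - (starRingEnd ℂ) b = α + β := by rw [hα, hβ]; ring
  rw [this]
  rw [div_eq_inv_mul]
  congr 1
  have : -Complex.I * (↑Real.pi * Complex.I) = (Real.pi : ℂ) := by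
    rw [show -Complex.I * (↑Real.pi * Complex.I) = -(Complex.I * Complex.I) * Real.pi by ring,
      Complex.I_mul_I]
    ring
  rw [this]
  ring

lemma sum4_comm {A B C D : Type*} [Fintype A] [Fintype B] [Fintype C] [Fintype D]
    (f : A → B → C → D → ℂ) :
    ∑ a, ∑ b, ∑ c, ∑ d, f a b c d = ∑ c, ∑ d, ∑ a, ∑ b, f a b c d := by
  calc ∑ a, ∑ b, ∑ c, ∑ d, f a b c d
      = ∑ a, ∑ c, ∑ b, ∑ d, f a b c d :=
        Finset.sum_congr rfl fun a _ => Finset.sum_comm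
    _ = ∑ c, ∑ a, ∑ b, ∑ d, f a b c d := Finset.sum_comm
    _ = ∑ c, ∑ a, ∑ d, ∑ b, f a b c d :=
        Finset.sum_congr rfl fun c _ => Finset.sum_congr rfl fun a _ => Finset.sum_comm
    _ = ∑ c, ∑ d, ∑ a, ∑ b, f a b c d :=
        Finset.sum_congr rfl fun c _ => Finset.sum_comm

theorem H2_norm_pole_residue_expression
    (n p m : ℕ) (lam : Fin n → ℂ) (hlam : ∀ i, (lam i).re < 0)
    (Φ : Fin n → Matrix (Fin p) (Fin m) ℂ) :
    ((((1 : ℝ) / (2 * Real.pi)) *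
        ∫ ν : ℝ, frobSq (∑ i, (Complex.I * (ν : ℂ) - lam i)⁻¹ • Φ i) : ℝ) : ℂ) =
      ∑ i, ∑ k, (Φ i * (Φ k)ᴴ).trace / (-lam i - (starRingEnd ℂ) (lam k)) := by
  classical
  set c : Fin n → ℝ → ℂ := fun i ν => (Complex.I * ν - lam i)⁻¹ with hc
  have hint : ∀ (i k : Fin n) (z : ℂ), Integrable (fun ν : ℝ =>
      (c i ν * (starRingEnd ℂ) (c k ν)) * z) :=
    fun i k z => (integrable_g (lam i) (lam k) (hlam i) (hlam k)).mul_const z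
  -- pointwise expansion of frobSq
  have hpt : ∀ ν : ℝ, ((frobSq (∑ i, (Complex.I * (ν : ℂ) - lam i)⁻¹ • Φ i) : ℝ) : ℂ)
      = ∑ j, ∑ l, ∑ i, ∑ k, (c i ν * (starRingEnd ℂ) (c k ν)) *
          (Φ i j l * (starRingEnd ℂ) (Φ k j l)) := by
    intro ν
    rw [frobSq]
    push_cast
    refine Finset.sum_congr rfl fun j _ => Finset.sum_congr rfl fun l _ => ?_
    have hentry : (∑ i, (Complex.I * (ν : ℂ) - lam i)⁻¹ • Φ i) j l
        = ∑ i, c i ν * Φ i j l := by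
      simp [Matrix.sum_apply, Matrix.smul_apply, smul_eq_mul, hc]
    rw [hentry]
    rw [show (((‖∑ i, c i ν * Φ i j l‖ : ℝ) : ℂ)) ^ 2
        = (∑ i, c i ν * Φ i j l) * (starRingEnd ℂ) (∑ i, c i ν * Φ i j l) by
      rw [Complex.mul_conj]; norm_cast; exact Complex.sq_norm _]
    rw [map_sum, Finset.sum_mul_sum]
    refine Finset.sum_congr rfl fun i _ => Finset.sum_congr rfl fun k _ => ?_
    rw [RingHom.map_mul]
    ring
  have hcoe : ((∫ ν : ℝ, frobSq (∑ i, (Complex.I * (ν : ℂ) - lam i)⁻¹ • Φ i) : ℝ) : ℂ)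
      = ∫ ν : ℝ, ((frobSq (∑ i, (Complex.I * (ν : ℂ) - lam i)⁻¹ • Φ i) : ℝ) : ℂ) :=
    (integral_ofReal (𝕜 := ℂ)).symm
  push_cast
  rw [hcoe]
  simp_rw [hpt]
  rw [integral_finset_sum _ (fun j _ => integrable_finset_sum _ fun l _ =>
    integrable_finset_sum _ fun i _ => integrable_finset_sum _ fun k _ => hint i k _)]
  simp_rw [integral_finset_sum _ (fun l (_ : l ∈ Finset.univ) => integrable_finset_sum _
    fun i _ => integrable_finset_sum _ fun k _ => hint i k _),
    integral_finset_sum _ (fun i (_ : i ∈ Finset.univ) => integrable_finset_sum _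
    fun k _ => hint i k _),
    integral_finset_sum _ (fun k (_ : k ∈ Finset.univ) => hint _ k _),
    integral_mul_const]
  have hval : ∀ i k : Fin n, (∫ ν : ℝ, c i ν * (starRingEnd ℂ) (c k ν))
      = 2 * Real.pi / (-lam i - (starRingEnd ℂ) (lam k)) :=
    fun i k => key_integral_s4 (lam i) (lam k) (hlam i) (hlam k)
  simp_rw [hval]
  -- now reorganize sums
  have h2π : ((2 : ℂ) * (Real.pi : ℂ)) ≠ 0 := by
    have : (2 * Real.pi : ℝ) ≠ 0 := by positivity
    exact_mod_cast this
  simp_rw [Finset.mul_sum]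
  rw [sum4_comm]
  refine Finset.sum_congr rfl fun i _ => Finset.sum_congr rfl fun k _ => ?_
  have htr : (Φ i * (Φ k)ᴴ).trace = ∑ j, ∑ l, Φ i j l * (starRingEnd ℂ) (Φ k j l) := by
    simp [Matrix.trace, Matrix.diag, Matrix.mul_apply, Matrix.conjTranspose_apply]
  rw [htr, Finset.sum_div]
  refine Finset.sum_congr rfl fun j _ => ?_
  rw [Finset.sum_div]
  refine Finset.sum_congr rfl fun l _ => ?_
  by_cases hd : -lam i - (starRingEnd ℂ) (lam k) = 0
  · simp [hd]
  · field_simp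
end

section
/- Let n, p, m be natural numbers, let λ : Fin n → ℂ satisfy Re(λ i) < 0 for all i, let Φ : Fin n → Matrix (Fin p) (Fin m) ℂ, and let D be a real p × m matrix (viewed as a complex matrix with real entries). Assume there is an involution σ : Fin n → Fin n with σ ∘ σ = id, λ(σ i) = conj(λ i), and Φ(σ i) equal to the entrywise complex conjugate of Φ i, for all i. Let ω > 0, and write H(s) = D + ∑ₖ (s − λ k)⁻¹ • Φ k (well-defined at s = −λ i since Re(−λ i) > 0 > Re(λ k)). Then the coercion to ℂ of the real number (1/(2π)) · ∫_{ν ∈ [−ω, ω]} ‖H(I·ν)‖_F² dν equals (ω/π) · ‖D‖_F² − (2/π) · ∑ i, tr(Φ i · H(−λ i)ᵀ) · atan(ω / λ i). -/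
open MeasureTheory Complex Matrix

-- basic nonvanishing facts
lemma ne_zero_of_re_neg {z : ℂ} (h : z.re < 0) : z ≠ 0 := by
  intro hz; rw [hz] at h; simp at h

lemma slit_of_re_pos {z : ℂ} (h : 0 < z.re) : z ∈ Complex.slitPlane :=
  Or.inl h

example (lam : ℂ) (hlam : lam.re < 0) (t : ℝ) :
    (Complex.I * t - lam) ∈ Complex.slitPlane := by
  apply slit_of_re_pos; simp [Complex.sub_re, Complex.mul_re]; linarith

-- slitPlane for 1 ± I*(t/lam)
example (lam : ℂ) (hlam : lam.re < 0) (t : ℝ) :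
    (1 + Complex.I * (t / lam)) ∈ Complex.slitPlane := by
  rcases eq_or_ne t 0 with h | h
  · simp [h]
  · right
    have hl : lam ≠ 0 := ne_zero_of_re_neg hlam
    have : (Complex.I * ((t:ℂ) / lam)).im = t * lam.re / Complex.normSq lam := by
      rw [div_eq_mul_inv, Complex.mul_im]
      simp [Complex.inv_im, Complex.inv_re, Complex.mul_re, Complex.mul_im]
      ring
    simp only [Complex.add_im, Complex.one_im, zero_add, this]
    intro hc
    have := div_eq_zero_iff.mp hc
    rcases this with h1 | h2
    · rcases mul_eq_zero.mp h1 with h3 | h4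
      · exact h (by exact_mod_cast h3)
      · exact absurd h4 (ne_of_lt hlam)
    · exact absurd h2 (ne_of_gt (Complex.normSq_pos.mpr hl))

lemma slit1 (lam : ℂ) (hlam : lam.re < 0) (t : ℝ) :
    (Complex.I * t - lam) ∈ Complex.slitPlane := by
  apply slit_of_re_pos; simp [Complex.sub_re, Complex.mul_re]; linarith

lemma slit2 (lam : ℂ) (hlam : lam.re < 0) (t : ℝ) :
    (-(Complex.I * t) - lam) ∈ Complex.slitPlane := by
  apply slit_of_re_pos; simp [Complex.sub_re, Complex.mul_re]; linarith

lemma im_aux (lam : ℂ) (t : ℝ) :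
    (Complex.I * ((t:ℂ) / lam)).im = t * lam.re / Complex.normSq lam := by
  rw [div_eq_mul_inv, Complex.mul_im]
  simp [Complex.inv_im, Complex.inv_re, Complex.mul_re, Complex.mul_im]
  ring

lemma slit3 (lam : ℂ) (hlam : lam.re < 0) (t : ℝ) :
    (1 + Complex.I * ((t:ℂ) / lam)) ∈ Complex.slitPlane := by
  rcases eq_or_ne t 0 with h | h
  · simp [h]
  · right
    have hl : lam ≠ 0 := ne_zero_of_re_neg hlam
    simp only [Complex.add_im, Complex.one_im, zero_add, im_aux]
    intro hc
    rcases div_eq_zero_iff.mp hc with h1 | h2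
    · rcases mul_eq_zero.mp h1 with h3 | h4
      · exact h (by exact_mod_cast h3)
      · exact absurd h4 (ne_of_lt hlam)
    · exact absurd h2 (ne_of_gt (Complex.normSq_pos.mpr hl))

lemma slit4 (lam : ℂ) (hlam : lam.re < 0) (t : ℝ) :
    (1 - Complex.I * ((t:ℂ) / lam)) ∈ Complex.slitPlane := by
  rcases eq_or_ne t 0 with h | h
  · simp [h]
  · right
    have hl : lam ≠ 0 := ne_zero_of_re_neg hlam
    simp only [Complex.sub_im, Complex.one_im, zero_sub, im_aux]
    intro hc
    rw [neg_eq_zero] at hc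
    rcases div_eq_zero_iff.mp hc with h1 | h2
    · rcases mul_eq_zero.mp h1 with h3 | h4
      · exact h (by exact_mod_cast h3)
      · exact absurd h4 (ne_of_lt hlam)
    · exact absurd h2 (ne_of_gt (Complex.normSq_pos.mpr hl))

lemma hasDeriv_coe (t : ℝ) : HasDerivAt (fun s : ℝ => (s : ℂ)) 1 t := by
  exact (hasDerivAt_id t).ofReal_comp


lemma helper_inv (a b c : ℂ) (ha : a ≠ 0) (hab : a + b ≠ 0) :
    (1 + b / a)⁻¹ * (c / a) = c / (a + b) := by
  rw [show 1 + b / a = (a + b) / a by field_simp, inv_div, div_mul_div_comm,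
    mul_comm a c, mul_div_mul_right _ _ ha]

lemma deriv_zero_expr (lam : ℂ) (s : ℝ) (hl : lam ≠ 0)
    (hne1 : Complex.I * (s:ℂ) - lam ≠ 0)
    (hne2 : -(Complex.I * (s:ℂ)) - lam ≠ 0) :
    (0:ℂ) = -Complex.I * ((Complex.I * ↑s - lam)⁻¹ * Complex.I - (-(Complex.I * ↑s) - lam)⁻¹ * -Complex.I) +
      2 * (1 / (2 * Complex.I) * ((1 + Complex.I * (↑s / lam))⁻¹ * (Complex.I / lam)
        - (1 - Complex.I * (↑s / lam))⁻¹ * -(Complex.I / lam))) := by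
  have hp : lam + Complex.I * (s:ℂ) ≠ 0 := by
    intro h; apply hne2; linear_combination -h
  have hq : lam + -(Complex.I * (s:ℂ)) ≠ 0 := by
    intro h; apply hne1; linear_combination -h
  have e3 : (1 + Complex.I * ((s:ℂ) / lam))⁻¹ * (Complex.I / lam)
      = Complex.I / (lam + Complex.I * (s:ℂ)) := by
    rw [show Complex.I * ((s:ℂ)/lam) = (Complex.I * (s:ℂ))/lam from (mul_div_assoc _ _ _).symm]
    exact helper_inv lam (Complex.I * (s:ℂ)) Complex.I hl hp
  have e4 : (1 - Complex.I * ((s:ℂ) / lam))⁻¹ * -(Complex.I / lam)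
      = -Complex.I / (lam + -(Complex.I * (s:ℂ))) := by
    rw [show (1 - Complex.I * ((s:ℂ) / lam)) = 1 + (-(Complex.I * (s:ℂ))) / lam by
        rw [neg_div]; ring_nf,
      show -(Complex.I / lam) = (-Complex.I) / lam by rw [neg_div]]
    exact helper_inv lam (-(Complex.I * (s:ℂ))) (-Complex.I) hl hq
  rw [show (1:ℂ)/(2*Complex.I) = 2⁻¹ * -Complex.I by
      rw [one_div, mul_inv, Complex.inv_I],
    e3, e4,
    show lam + Complex.I * (s:ℂ) = -(-(Complex.I * (s:ℂ)) - lam) by ring,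
    show lam + -(Complex.I * (s:ℂ)) = -(Complex.I * (s:ℂ) - lam) by ring,
    div_neg, div_neg, div_eq_mul_inv, div_eq_mul_inv]
  ring

lemma branch_eq (lam : ℂ) (hlam : lam.re < 0) (t : ℝ) :
    -Complex.I * (Complex.log (Complex.I * t - lam)
      - Complex.log (-(Complex.I * t) - lam)) = -2 * catan ((t : ℂ) / lam) := by
  have hl : lam ≠ 0 := ne_zero_of_re_neg hlam
  set f : ℝ → ℂ := fun t => -Complex.I * (Complex.log (Complex.I * t - lam)
      - Complex.log (-(Complex.I * t) - lam)) + 2 * catan ((t : ℂ) / lam) with hf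
  have hderiv : ∀ s : ℝ, HasDerivAt f 0 s := by
    intro s
    have h1 : HasDerivAt (fun t : ℝ => Complex.I * (t:ℂ) - lam) Complex.I s := by
      simpa using ((hasDeriv_coe s).const_mul Complex.I).sub_const lam
    have h2 : HasDerivAt (fun t : ℝ => -(Complex.I * (t:ℂ)) - lam) (-Complex.I) s := by
      simpa using (((hasDeriv_coe s).const_mul Complex.I).neg).sub_const lam
    have h3 : HasDerivAt (fun t : ℝ => 1 + Complex.I * ((t:ℂ) / lam)) (Complex.I / lam) s := by
      have : HasDerivAt (fun t : ℝ => Complex.I * ((t:ℂ) / lam)) (Complex.I / lam) s := by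
        exact (((hasDeriv_coe s).div_const lam).const_mul Complex.I).congr_deriv (by ring)
      simpa using this.const_add 1
    have h4 : HasDerivAt (fun t : ℝ => 1 - Complex.I * ((t:ℂ) / lam)) (-(Complex.I / lam)) s := by
      have : HasDerivAt (fun t : ℝ => Complex.I * ((t:ℂ) / lam)) (Complex.I / lam) s := by
        exact (((hasDeriv_coe s).div_const lam).const_mul Complex.I).congr_deriv (by ring)
      simpa using this.const_sub 1
    have L1 := (Complex.hasDerivAt_log (slit1 lam hlam s)).comp s h1
    have L2 := (Complex.hasDerivAt_log (slit2 lam hlam s)).comp s h2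
    have L3 := (Complex.hasDerivAt_log (slit3 lam hlam s)).comp s h3
    have L4 := (Complex.hasDerivAt_log (slit4 lam hlam s)).comp s h4
    have hcat : HasDerivAt (fun t : ℝ => catan ((t:ℂ)/lam))
        ((1 / (2 * Complex.I)) * ((1 + Complex.I * ((s:ℂ)/lam))⁻¹ * (Complex.I / lam)
          - (1 - Complex.I * ((s:ℂ)/lam))⁻¹ * (-(Complex.I / lam)))) s := by
      unfold catan
      exact (L3.sub L4).const_mul _
    have total := ((L1.sub L2).const_mul (-Complex.I)).add (hcat.const_mul 2)
    have hne1 : Complex.I * (s:ℂ) - lam ≠ 0 := Complex.slitPlane_ne_zero (slit1 lam hlam s)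
    have hne2 : -(Complex.I * (s:ℂ)) - lam ≠ 0 := Complex.slitPlane_ne_zero (slit2 lam hlam s)
    have hne3 : 1 + Complex.I * ((s:ℂ)/lam) ≠ 0 := Complex.slitPlane_ne_zero (slit3 lam hlam s)
    have hne4 : 1 - Complex.I * ((s:ℂ)/lam) ≠ 0 := Complex.slitPlane_ne_zero (slit4 lam hlam s)
    have hne5 : lam + Complex.I * (s:ℂ) ≠ 0 := by
      intro h; apply hne2; linear_combination -h
    have hne6 : lam - Complex.I * (s:ℂ) ≠ 0 := by
      intro h; apply hne1; linear_combination -h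
    exact total.congr_deriv (deriv_zero_expr lam s hl hne1 hne2).symm
  have hzero : f 0 = 0 := by
    simp [hf, catan, Complex.log_one]
  have hconst : f t = f 0 :=
    is_const_of_deriv_eq_zero (fun s => (hderiv s).differentiableAt)
      (fun s => (hderiv s).deriv) t 0
  have : f t = 0 := hconst.trans hzero
  rw [hf] at this
  simp only at this
  linear_combination this

lemma integral_inv_eq (lam : ℂ) (hlam : lam.re < 0) (ω : ℝ) :
    (∫ ν in (-ω)..ω, (Complex.I * (ν:ℂ) - lam)⁻¹) = -2 * catan ((ω:ℂ) / lam) := by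
  have hA : ∀ ν : ℝ, HasDerivAt (fun t : ℝ => -Complex.I * Complex.log (Complex.I * (t:ℂ) - lam))
      ((Complex.I * (ν:ℂ) - lam)⁻¹) ν := by
    intro ν
    have h1 : HasDerivAt (fun t : ℝ => Complex.I * (t:ℂ) - lam) Complex.I ν := by
      simpa using ((hasDeriv_coe ν).const_mul Complex.I).sub_const lam
    have L := ((Complex.hasDerivAt_log (slit1 lam hlam ν)).comp ν h1).const_mul (-Complex.I)
    refine L.congr_deriv ?_
    have : Complex.I * (ν:ℂ) - lam ≠ 0 := Complex.slitPlane_ne_zero (slit1 lam hlam ν)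
    field_simp
    simp
  have hcont : Continuous fun ν : ℝ => (Complex.I * (ν:ℂ) - lam)⁻¹ := by
    apply Continuous.inv₀
    · continuity
    · intro x; exact Complex.slitPlane_ne_zero (slit1 lam hlam x)
  have := intervalIntegral.integral_eq_sub_of_hasDerivAt
    (fun x _ => hA x) (hcont.intervalIntegrable (-ω) ω)
  rw [this]
  have harg : Complex.I * (((-ω : ℝ)):ℂ) - lam = -(Complex.I * (ω:ℂ)) - lam := by
    push_cast; ring
  rw [harg]
  have hb := branch_eq lam hlam ω
  linear_combination hb

lemma cont_inv1 (lam : ℂ) (hlam : lam.re < 0) :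
    Continuous fun ν : ℝ => (Complex.I * (ν:ℂ) - lam)⁻¹ := by
  apply Continuous.inv₀
  · continuity
  · intro x; exact Complex.slitPlane_ne_zero (slit1 lam hlam x)

lemma cont_inv2 (lam : ℂ) (hlam : lam.re < 0) :
    Continuous fun ν : ℝ => (-(Complex.I * (ν:ℂ)) - lam)⁻¹ := by
  apply Continuous.inv₀
  · continuity
  · intro x; exact Complex.slitPlane_ne_zero (slit2 lam hlam x)

lemma integral_inv_eq' (lam : ℂ) (hlam : lam.re < 0) (ω : ℝ) :
    (∫ ν in (-ω)..ω, (-(Complex.I * (ν:ℂ)) - lam)⁻¹) = -2 * catan ((ω:ℂ) / lam) := by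
  have h := intervalIntegral.integral_comp_neg (a := -ω) (b := ω)
    (fun ν : ℝ => (Complex.I * (ν:ℂ) - lam)⁻¹)
  rw [neg_neg] at h
  rw [← integral_inv_eq lam hlam ω, ← h]
  apply intervalIntegral.integral_congr
  intro x _
  push_cast
  ring_nf

lemma integral_prod_inv (a b : ℂ) (ha : a.re < 0) (hb : b.re < 0) (ω : ℝ) :
    (∫ ν in (-ω)..ω, (Complex.I * (ν:ℂ) - a)⁻¹ * (-(Complex.I * (ν:ℂ)) - b)⁻¹)
      = (-(a + b))⁻¹ * (-2 * catan ((ω:ℂ) / a) + -2 * catan ((ω:ℂ) / b)) := by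
  have hab : -(a + b) ≠ 0 := by
    intro h
    have : (-(a+b)).re = 0 := by rw [h]; simp
    simp [Complex.neg_re, Complex.add_re] at this
    linarith
  have hcongr : ∀ ν : ℝ, (Complex.I * (ν:ℂ) - a)⁻¹ * (-(Complex.I * (ν:ℂ)) - b)⁻¹
      = (-(a + b))⁻¹ * ((Complex.I * (ν:ℂ) - a)⁻¹ + (-(Complex.I * (ν:ℂ)) - b)⁻¹) := by
    intro ν
    have h1 : Complex.I * (ν:ℂ) - a ≠ 0 := Complex.slitPlane_ne_zero (slit1 a ha ν)
    have h2 : -(Complex.I * (ν:ℂ)) - b ≠ 0 := Complex.slitPlane_ne_zero (slit2 b hb ν)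
    rw [inv_add_inv h1 h2,
      show (Complex.I * (ν:ℂ) - a) + (-(Complex.I * (ν:ℂ)) - b) = -(a+b) by ring,
      ← mul_div_assoc, inv_mul_cancel₀ hab, one_div, mul_inv]
  rw [intervalIntegral.integral_congr (fun ν _ => hcongr ν),
    intervalIntegral.integral_const_mul,
    intervalIntegral.integral_add
      ((cont_inv1 a ha).intervalIntegrable _ _)
      ((cont_inv2 b hb).intervalIntegrable _ _),
    integral_inv_eq a ha ω, integral_inv_eq' b hb ω]

lemma trace_mul_transpose {p m : ℕ} (A B : Matrix (Fin p) (Fin m) ℂ) :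
    (A * Bᵀ).trace = ∑ i, ∑ j, A i j * B i j := by
  simp [Matrix.trace, Matrix.diag, Matrix.mul_apply]

theorem freq_limited_H2_norm_pole_residue_expression
    (n p m : ℕ) (lam : Fin n → ℂ) (hlam : ∀ i, (lam i).re < 0)
    (Φ : Fin n → Matrix (Fin p) (Fin m) ℂ)
    (D : Matrix (Fin p) (Fin m) ℝ)
    (σ : Fin n → Fin n) (hsigsig : σ ∘ σ = id)
    (hsiglam : ∀ i, lam (σ i) = (starRingEnd ℂ) (lam i))
    (hsigPhi : ∀ i, Φ (σ i) = (Φ i).map (starRingEnd ℂ))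
    (ω : ℝ) (hω : 0 < ω)
    (H : ℂ → Matrix (Fin p) (Fin m) ℂ)
    (hH : ∀ s, H s = D.map (fun x => (x : ℂ)) + ∑ k, (s - lam k)⁻¹ • Φ k) :
    ((((1 : ℝ) / (2 * Real.pi)) *
        ∫ ν in (-ω)..ω, frobSq (H (Complex.I * (ν : ℂ))) : ℝ) : ℂ) =
      ((ω / Real.pi : ℝ) : ℂ) * ((frobSq (D.map (fun x => (x : ℂ))) : ℝ) : ℂ) -
        ((2 / Real.pi : ℝ) : ℂ) *
          ∑ i, (Φ i * (H (-lam i))ᵀ).trace * catan ((ω : ℂ) / lam i) := by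
  have hHe : ∀ (s : ℂ) i j, H s i j
      = (D i j : ℂ) + ∑ k, (s - lam k)⁻¹ * Φ k i j := by
    intro s i j
    rw [hH]
    simp [Matrix.add_apply, Matrix.sum_apply, Matrix.smul_apply, smul_eq_mul, Matrix.map_apply]
  have e : Function.Bijective σ :=
    Function.Involutive.bijective (fun x => congrFun hsigsig x)
  have hconj : ∀ (ν : ℝ) i j, (starRingEnd ℂ) (H (Complex.I * ν) i j)
      = H (-(Complex.I * ν)) i j := by
    intro ν i j
    rw [hHe, hHe, map_add, map_sum]
    congr 1
    · exact Complex.conj_ofReal _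
    · rw [← Function.Bijective.sum_comp e (fun k => (-(Complex.I*ν) - lam k)⁻¹ * Φ k i j)]
      apply Finset.sum_congr rfl
      intro k _
      rw [_root_.map_mul, map_inv₀, map_sub, hsiglam, hsigPhi]
      simp only [Matrix.map_apply, _root_.map_mul, Complex.conj_I, Complex.conj_ofReal]
      ring_nf
  have trace_mul_transpose : ∀ (A B : Matrix (Fin p) (Fin m) ℂ),
      (A * Bᵀ).trace = ∑ i, ∑ j, A i j * B i j := by
    intro A B
    simp [Matrix.trace, Matrix.diag, Matrix.mul_apply]
  have hfrob : ∀ ν : ℝ, ((frobSq (H (Complex.I * ν)) : ℝ) : ℂ)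
      = ((H (Complex.I * ν)) * (H (-(Complex.I * ν)))ᵀ).trace := by
    intro ν
    rw [trace_mul_transpose]
    unfold frobSq
    push_cast
    apply Finset.sum_congr rfl; intro i _
    apply Finset.sum_congr rfl; intro j _
    rw [← hconj ν i j, ← Complex.ofReal_pow, Complex.sq_norm, Complex.mul_conj]
  have hexpand : ∀ ν : ℝ, ((H (Complex.I * ν)) * (H (-(Complex.I * ν)))ᵀ).trace
      = ((D.map (fun x => (x:ℂ))) * (D.map (fun x => (x:ℂ)))ᵀ).trace
        + (∑ k, (Complex.I * ν - lam k)⁻¹ * (Φ k * (D.map (fun x => (x:ℂ)))ᵀ).trace)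
        + (∑ k, (-(Complex.I * ν) - lam k)⁻¹ * ((D.map (fun x => (x:ℂ))) * (Φ k)ᵀ).trace)
        + ∑ k, ∑ l, ((Complex.I * ν - lam k)⁻¹ * (-(Complex.I * ν) - lam l)⁻¹)
            * (Φ k * (Φ l)ᵀ).trace := by
    intro ν
    rw [hH, hH]
    simp only [Matrix.transpose_add, Matrix.transpose_smul, Matrix.add_mul, Matrix.mul_add,
      Matrix.trace_add, Matrix.smul_mul, Matrix.mul_smul, Matrix.trace_smul, smul_eq_mul,
      Finset.sum_add_distrib, Matrix.sum_mul, Matrix.mul_sum, Matrix.trace_sum, smul_smul,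
      Matrix.transpose_sum, mul_add]
    have hdouble : (∑ x : Fin n, (-(Complex.I * ν) - lam x)⁻¹
          * ∑ x1 : Fin n, (Complex.I * ν - lam x1)⁻¹ * (Φ x1 * (Φ x)ᵀ).trace)
        = ∑ k, ∑ l, ((Complex.I * ν - lam k)⁻¹ * (-(Complex.I * ν) - lam l)⁻¹)
            * (Φ k * (Φ l)ᵀ).trace := by
      simp only [Finset.mul_sum]
      rw [Finset.sum_comm]
      exact Finset.sum_congr rfl fun k _ => Finset.sum_congr rfl fun l _ => by ring
    linear_combination hdouble
  -- continuity / integrability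
  have c1 : ∀ k : Fin n, Continuous fun ν : ℝ => (Complex.I * (ν:ℂ) - lam k)⁻¹ :=
    fun k => cont_inv1 (lam k) (hlam k)
  have c2 : ∀ k : Fin n, Continuous fun ν : ℝ => (-(Complex.I * (ν:ℂ)) - lam k)⁻¹ :=
    fun k => cont_inv2 (lam k) (hlam k)
  have i1 : IntervalIntegrable (fun _ : ℝ =>
      (((D.map (fun x => (x:ℂ))) * (D.map (fun x => (x:ℂ)))ᵀ).trace)) volume (-ω) ω :=
    intervalIntegrable_const
  have i2 : IntervalIntegrable (fun ν : ℝ =>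
      ∑ k, (Complex.I * (ν:ℂ) - lam k)⁻¹ * (Φ k * (D.map (fun x => (x:ℂ)))ᵀ).trace)
      volume (-ω) ω :=
    (continuous_finset_sum _ fun k _ => (c1 k).mul continuous_const).intervalIntegrable _ _
  have i3 : IntervalIntegrable (fun ν : ℝ =>
      ∑ k, (-(Complex.I * (ν:ℂ)) - lam k)⁻¹ * ((D.map (fun x => (x:ℂ))) * (Φ k)ᵀ).trace)
      volume (-ω) ω :=
    (continuous_finset_sum _ fun k _ => (c2 k).mul continuous_const).intervalIntegrable _ _
  have i4 : IntervalIntegrable (fun ν : ℝ =>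
      ∑ k, ∑ l, ((Complex.I * (ν:ℂ) - lam k)⁻¹ * (-(Complex.I * (ν:ℂ)) - lam l)⁻¹)
        * (Φ k * (Φ l)ᵀ).trace) volume (-ω) ω :=
    (continuous_finset_sum _ fun k _ => continuous_finset_sum _ fun l _ =>
      (((c1 k).mul (c2 l)).mul continuous_const)).intervalIntegrable _ _
  have hint : (∫ ν in (-ω)..ω, ((frobSq (H (Complex.I * ν)) : ℝ) : ℂ))
      = ((2*ω : ℝ):ℂ) * (((D.map (fun x => (x:ℂ))) * (D.map (fun x => (x:ℂ)))ᵀ).trace)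
        + (∑ k, (-2 * catan ((ω:ℂ) / lam k)) * (Φ k * (D.map (fun x => (x:ℂ)))ᵀ).trace)
        + (∑ k, (-2 * catan ((ω:ℂ) / lam k)) * ((D.map (fun x => (x:ℂ))) * (Φ k)ᵀ).trace)
        + ∑ k, ∑ l, ((-(lam k + lam l))⁻¹
            * (-2 * catan ((ω:ℂ) / lam k) + -2 * catan ((ω:ℂ) / lam l)))
            * (Φ k * (Φ l)ᵀ).trace := by
    rw [intervalIntegral.integral_congr (g := fun ν : ℝ =>
      (((D.map (fun x => (x:ℂ))) * (D.map (fun x => (x:ℂ)))ᵀ).trace)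
        + (∑ k, (Complex.I * (ν:ℂ) - lam k)⁻¹ * (Φ k * (D.map (fun x => (x:ℂ)))ᵀ).trace)
        + (∑ k, (-(Complex.I * (ν:ℂ)) - lam k)⁻¹ * ((D.map (fun x => (x:ℂ))) * (Φ k)ᵀ).trace)
        + ∑ k, ∑ l, ((Complex.I * (ν:ℂ) - lam k)⁻¹ * (-(Complex.I * (ν:ℂ)) - lam l)⁻¹)
            * (Φ k * (Φ l)ᵀ).trace) (fun ν _ => (hfrob ν).trans (hexpand ν))]
    rw [intervalIntegral.integral_add ((i1.add i2).add i3) i4,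
      intervalIntegral.integral_add (i1.add i2) i3,
      intervalIntegral.integral_add i1 i2,
      intervalIntegral.integral_const]
    congr 1
    congr 1
    congr 1
    · rw [Complex.real_smul]
      congr 1
      push_cast
      ring
    · rw [intervalIntegral.integral_finset_sum
        (f := fun k ν => (Complex.I * (ν:ℂ) - lam k)⁻¹ * (Φ k * (D.map (fun x => (x:ℂ)))ᵀ).trace)
        (fun k _ => ((c1 k).mul continuous_const).intervalIntegrable _ _)]
      exact Finset.sum_congr rfl fun k _ => by
        rw [intervalIntegral.integral_mul_const, integral_inv_eq (lam k) (hlam k) ω]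
    · rw [intervalIntegral.integral_finset_sum
        (f := fun k ν => (-(Complex.I * (ν:ℂ)) - lam k)⁻¹ * ((D.map (fun x => (x:ℂ))) * (Φ k)ᵀ).trace)
        (fun k _ => ((c2 k).mul continuous_const).intervalIntegrable _ _)]
      exact Finset.sum_congr rfl fun k _ => by
        rw [intervalIntegral.integral_mul_const, integral_inv_eq' (lam k) (hlam k) ω]
    · rw [intervalIntegral.integral_finset_sum
        (f := fun k ν => ∑ l, ((Complex.I * (ν:ℂ) - lam k)⁻¹ * (-(Complex.I * (ν:ℂ)) - lam l)⁻¹)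
          * (Φ k * (Φ l)ᵀ).trace)
        (fun k _ => (continuous_finset_sum _ fun l _ =>
          (((c1 k).mul (c2 l)).mul continuous_const)).intervalIntegrable _ _)]
      refine Finset.sum_congr rfl fun k _ => ?_
      rw [intervalIntegral.integral_finset_sum
        (f := fun l ν => ((Complex.I * (ν:ℂ) - lam k)⁻¹ * (-(Complex.I * (ν:ℂ)) - lam l)⁻¹)
          * (Φ k * (Φ l)ᵀ).trace)
        (fun l _ => (((c1 k).mul (c2 l)).mul continuous_const).intervalIntegrable _ _)]
      refine Finset.sum_congr rfl fun l _ => ?_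
      rw [intervalIntegral.integral_mul_const,
        integral_prod_inv (lam k) (lam l) (hlam k) (hlam l) ω]
  have htr : ∀ i, (Φ i * (H (-lam i))ᵀ).trace
      = (Φ i * ((D.map fun x => (x:ℂ)))ᵀ).trace
        + ∑ l, (-lam i - lam l)⁻¹ * (Φ i * (Φ l)ᵀ).trace := by
    intro i
    rw [hH]
    simp only [Matrix.transpose_add, Matrix.transpose_smul, Matrix.mul_add, Matrix.trace_add,
      Matrix.mul_smul, Matrix.trace_smul, smul_eq_mul, Matrix.transpose_sum, Matrix.mul_sum,
      Matrix.trace_sum]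
  have hsymD : ∀ k, ((D.map fun x => (x:ℂ)) * (Φ k)ᵀ).trace
      = (Φ k * ((D.map fun x => (x:ℂ)))ᵀ).trace := by
    intro k
    rw [← Matrix.trace_transpose ((D.map fun x => (x:ℂ)) * (Φ k)ᵀ), Matrix.transpose_mul,
      Matrix.transpose_transpose]
  have hsymP : ∀ k l, (Φ k * (Φ l)ᵀ).trace = (Φ l * (Φ k)ᵀ).trace := by
    intro k l
    rw [← Matrix.trace_transpose (Φ k * (Φ l)ᵀ), Matrix.transpose_mul,
      Matrix.transpose_transpose]
  have hDD : ((frobSq (D.map fun x => (x:ℂ)) : ℝ) : ℂ)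
      = ((D.map fun x => (x:ℂ)) * ((D.map fun x => (x:ℂ)))ᵀ).trace := by
    rw [trace_mul_transpose]
    unfold frobSq
    push_cast
    refine Finset.sum_congr rfl fun i _ => Finset.sum_congr rfl fun j _ => ?_
    simp only [Matrix.map_apply]
    rw [← Complex.ofReal_pow, Complex.sq_norm, Complex.normSq_ofReal]
    push_cast
    ring
  rw [Complex.ofReal_mul, ← intervalIntegral.integral_ofReal, hint, hDD]
  have hRHS : (∑ i, (Φ i * (H (-lam i))ᵀ).trace * catan ((ω:ℂ) / lam i))
      = (∑ k, (Φ k * ((D.map fun x => (x:ℂ)))ᵀ).trace * catan ((ω:ℂ) / lam k))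
        + ∑ k, ∑ l, (-lam k - lam l)⁻¹ * (Φ k * (Φ l)ᵀ).trace * catan ((ω:ℂ) / lam k) := by
    rw [← Finset.sum_add_distrib]
    refine Finset.sum_congr rfl fun k _ => ?_
    rw [htr k, add_mul, Finset.sum_mul]
  rw [hRHS]
  have e2 : (∑ k, (-2 * catan ((ω:ℂ)/lam k)) * ((D.map fun x => (x:ℂ)) * (Φ k)ᵀ).trace)
      = ∑ k, (-2 * catan ((ω:ℂ)/lam k)) * (Φ k * ((D.map fun x => (x:ℂ)))ᵀ).trace :=
    Finset.sum_congr rfl fun k _ => by rw [hsymD k]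
  rw [e2]
  have eS1 : (∑ k, (-2 * catan ((ω:ℂ)/lam k)) * (Φ k * ((D.map fun x => (x:ℂ)))ᵀ).trace)
      = -2 * ∑ k, (Φ k * ((D.map fun x => (x:ℂ)))ᵀ).trace * catan ((ω:ℂ) / lam k) := by
    rw [Finset.mul_sum]; exact Finset.sum_congr rfl fun k _ => by ring
  rw [eS1]
  have hmu : ∀ k l : Fin n, (-(lam k + lam l))⁻¹ = (-lam k - lam l)⁻¹ := fun k l => by
    congr 1; ring
  have eS3 : (∑ k, ∑ l, ((-(lam k + lam l))⁻¹
        * (-2 * catan ((ω:ℂ) / lam k) + -2 * catan ((ω:ℂ) / lam l))) * (Φ k * (Φ l)ᵀ).trace)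
      = -4 * ∑ k, ∑ l, (-lam k - lam l)⁻¹ * (Φ k * (Φ l)ᵀ).trace * catan ((ω:ℂ) / lam k) := by
    have split : (∑ k, ∑ l, ((-(lam k + lam l))⁻¹
          * (-2 * catan ((ω:ℂ) / lam k) + -2 * catan ((ω:ℂ) / lam l))) * (Φ k * (Φ l)ᵀ).trace)
        = (∑ k, ∑ l, -2 * ((-lam k - lam l)⁻¹ * (Φ k * (Φ l)ᵀ).trace * catan ((ω:ℂ) / lam k)))
          + ∑ k, ∑ l, -2 * ((-lam k - lam l)⁻¹ * (Φ k * (Φ l)ᵀ).trace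
              * catan ((ω:ℂ) / lam l)) := by
      rw [← Finset.sum_add_distrib]
      refine Finset.sum_congr rfl fun k _ => ?_
      rw [← Finset.sum_add_distrib]
      refine Finset.sum_congr rfl fun l _ => ?_
      rw [hmu]; ring
    rw [split]
    have swap : (∑ k, ∑ l, -2 * ((-lam k - lam l)⁻¹ * (Φ k * (Φ l)ᵀ).trace
          * catan ((ω:ℂ) / lam l)))
        = ∑ k, ∑ l, -2 * ((-lam k - lam l)⁻¹ * (Φ k * (Φ l)ᵀ).trace
            * catan ((ω:ℂ) / lam k)) := by
      rw [Finset.sum_comm]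
      refine Finset.sum_congr rfl fun k _ => Finset.sum_congr rfl fun l _ => ?_
      rw [hsymP l k, show (-lam l - lam k)⁻¹ = (-lam k - lam l)⁻¹ by congr 1; ring]
    rw [swap]
    have factor : (∑ k, ∑ l, -2 * ((-lam k - lam l)⁻¹ * (Φ k * (Φ l)ᵀ).trace
          * catan ((ω:ℂ) / lam k)))
        = -2 * ∑ k, ∑ l, (-lam k - lam l)⁻¹ * (Φ k * (Φ l)ᵀ).trace * catan ((ω:ℂ) / lam k) := by
      rw [Finset.mul_sum]
      exact Finset.sum_congr rfl fun k _ => by rw [Finset.mul_sum]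
    rw [factor]
    ring
  rw [eS3]
  push_cast
  have hpi : (Real.pi : ℂ) ≠ 0 := by
    exact_mod_cast Real.pi_ne_zero
  field_simp
  ring
end

section
/- Let E be a finite index set, let λ : E → ℂ satisfy Re(λ i) < 0 for all i, let Φ : E → Matrix (Fin p) (Fin m) ℂ, and let ω > 0. Then Real.sqrt((1/(2π)) · ∫_{ν ∈ [−ω, ω]} ‖∑_{i ∈ E} (I·ν − λ i)⁻¹ • Φ i‖_F² dν) ≤ ∑_{i ∈ E} (‖Φ i‖_F / Real.sqrt(−2 · Re(λ i))) · Real.sqrt(−(2/π) · Re(atan(ω / λ i))). -/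
open MeasureTheory Complex Matrix

/-- Frobenius norm of a complex matrix. -/
noncomputable def frobNorm {p m : ℕ} (M : Matrix (Fin p) (Fin m) ℂ) : ℝ :=
  Real.sqrt (frobSq M)

/- ------------------- auxiliary lemmas ------------------- -/

lemma arg_of_re_pos' (w : ℂ) (h : 0 < w.re) : w.arg = Real.arctan (w.im / w.re) := by
  rw [← Complex.tan_arg, Real.arctan_tan]
  · exact neg_pi_div_two_lt_arg_iff.2 (Or.inl h)
  · exact arg_lt_pi_div_two_iff.2 (Or.inl h)

lemma abs_arg_lt' (w : ℂ) (h : 0 < w.re) : |w.arg| < Real.pi / 2 :=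
  Complex.abs_arg_lt_pi_div_two_iff.2 (Or.inl h)

lemma catan_re (lam : ℂ) (h : lam.re < 0) (ω : ℝ) :
    -2 * (catan ((ω : ℂ) / lam)).re
      = Real.arctan ((ω - lam.im) / (-lam.re)) + Real.arctan ((ω + lam.im) / (-lam.re)) := by
  have hlam : lam ≠ 0 := fun h0 => by simp [h0] at h
  set z : ℂ := (ω : ℂ) / lam with hz
  have hre : (catan z).re = ((1 + I * z).arg - (1 - I * z).arg) / 2 := by
    have : catan z = -(I/2) * (Complex.log (1 + I * z) - Complex.log (1 - I * z)) := by
      rw [catan]; congr 1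
      rw [div_eq_iff (by simp [Complex.ext_iff] : (2 : ℂ) * I ≠ 0),
        show -(I/2) * (2*I) = -(I*I)/2*2 by ring, I_mul_I]
      norm_num
    rw [this, Complex.mul_re]
    simp [Complex.log_im]
    ring
  set w1 : ℂ := I * ω - lam with hw1
  set w2 : ℂ := -(I * ω) - lam with hw2
  set u : ℂ := -lam⁻¹ with hu
  have hu0 : u ≠ 0 := by simp [hu, hlam]
  have hnsq : 0 < Complex.normSq lam := Complex.normSq_pos.2 hlam
  have hure : 0 < u.re := by
    rw [hu, Complex.neg_re, Complex.inv_re, ← neg_div]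
    exact div_pos (neg_pos.2 h) hnsq
  have hw1re : 0 < w1.re := by simpa [hw1] using neg_pos.2 h
  have hw2re : 0 < w2.re := by simpa [hw2] using neg_pos.2 h
  have hw10 : w1 ≠ 0 := fun h0 => by rw [h0] at hw1re; simp at hw1re
  have hw20 : w2 ≠ 0 := fun h0 => by rw [h0] at hw2re; simp at hw2re
  have h1 : 1 - I * z = w1 * u := by
    rw [hz, hw1, hu]; field_simp; ring
  have h2 : 1 + I * z = w2 * u := by
    rw [hz, hw2, hu]; field_simp; ring
  have hmem : ∀ v : ℂ, 0 < v.re → v.arg + u.arg ∈ Set.Ioc (-Real.pi) Real.pi := by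
    intro v hv
    have b1 := abs_arg_lt' v hv
    have b2 := abs_arg_lt' u hure
    rw [abs_lt] at b1 b2
    constructor
    · linarith
    · linarith
  have a1 : (w1 * u).arg = w1.arg + u.arg := Complex.arg_mul hw10 hu0 (hmem w1 hw1re)
  have a2 : (w2 * u).arg = w2.arg + u.arg := Complex.arg_mul hw20 hu0 (hmem w2 hw2re)
  have e1 : w1.arg = Real.arctan ((ω - lam.im) / (-lam.re)) := by
    rw [arg_of_re_pos' w1 hw1re]; congr 1 <;> simp [hw1]
  have e2 : w2.arg = -Real.arctan ((ω + lam.im) / (-lam.re)) := by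
    rw [arg_of_re_pos' w2 hw2re, ← Real.arctan_neg]; congr 1
    rw [hw2]; simp; ring
  rw [hre, h1, h2, a1, a2, e1, e2]; ring

lemma integral_inv_sq_add (a b ω : ℝ) (ha : 0 < a) :
    ∫ ν in (-ω)..ω, (a^2 + (ν - b)^2)⁻¹
      = (1/a) * (Real.arctan ((ω - b)/a) + Real.arctan ((ω + b)/a)) := by
  have hd : ∀ ν : ℝ, HasDerivAt (fun t => (1/a) * Real.arctan ((t - b)/a))
      ((a^2 + (ν - b)^2)⁻¹) ν := by
    intro ν
    have h1 : HasDerivAt (fun t : ℝ => (t - b)/a) (1/a) ν := by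
      simpa using ((hasDerivAt_id ν).sub_const b).div_const a
    have h2 := (Real.hasDerivAt_arctan ((ν - b)/a)).comp ν h1
    have h3 := h2.const_mul (1/a)
    refine h3.congr_deriv ?_
    field_simp
  have hc : Continuous fun ν : ℝ => (a^2 + (ν - b)^2)⁻¹ := by
    apply Continuous.inv₀ (by continuity)
    intro x; positivity
  rw [intervalIntegral.integral_eq_sub_of_hasDerivAt (fun x _ => hd x)
    (hc.intervalIntegrable _ _)]
  rw [show (-ω - b)/a = -((ω + b)/a) by ring, Real.arctan_neg]
  ring

lemma eLpNorm_two_eq_ofReal_sqrt {α : Type*} [MeasurableSpace α] {μ : Measure α}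
    {V : Type*} [NormedAddCommGroup V] {g : α → V} (hg : MemLp g 2 μ) :
    eLpNorm g 2 μ = ENNReal.ofReal (Real.sqrt (∫ x, ‖g x‖^2 ∂μ)) := by
  rw [hg.eLpNorm_eq_integral_rpow_norm two_ne_zero ENNReal.ofNat_ne_top]
  have h2 : (2 : ENNReal).toReal = 2 := by norm_num
  rw [h2, Real.sqrt_eq_rpow, one_div]
  congr 2
  apply integral_congr_ae; filter_upwards with x
  rw [show (2:ℝ) = ((2:ℕ):ℝ) by norm_num, Real.rpow_natCast]

lemma sqrt_integral_sum_le {α : Type*} [MeasurableSpace α] (μ : Measure α)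
    {ι : Type*} [Fintype ι] {V : Type*} [NormedAddCommGroup V]
    (f : ι → α → V) (hf : ∀ i, MemLp (f i) 2 μ) :
    Real.sqrt (∫ x, ‖∑ i, f i x‖^2 ∂μ) ≤ ∑ i, Real.sqrt (∫ x, ‖f i x‖^2 ∂μ) := by
  have hsum : MemLp (fun x => ∑ i, f i x) 2 μ :=
    memLp_finset_sum Finset.univ (fun i _ => hf i)
  have key : eLpNorm (fun x => ∑ i, f i x) 2 μ ≤ ∑ i, eLpNorm (f i) 2 μ := by
    have := eLpNorm_sum_le (f := f) (s := Finset.univ)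
      (fun i _ => (hf i).aestronglyMeasurable) one_le_two
    refine le_trans (le_of_eq ?_) this
    congr 1
    ext x
    simp [Finset.sum_apply]
  rw [eLpNorm_two_eq_ofReal_sqrt hsum] at key
  have key2 : ENNReal.ofReal (Real.sqrt (∫ x, ‖∑ i, f i x‖^2 ∂μ))
      ≤ ENNReal.ofReal (∑ i, Real.sqrt (∫ x, ‖f i x‖^2 ∂μ)) := by
    refine le_trans key (le_of_eq ?_)
    rw [ENNReal.ofReal_sum_of_nonneg (fun i _ => Real.sqrt_nonneg _)]
    exact Finset.sum_congr rfl fun i _ => eLpNorm_two_eq_ofReal_sqrt (hf i)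
  exact (ENNReal.ofReal_le_ofReal_iff
    (Finset.sum_nonneg fun i _ => Real.sqrt_nonneg _)).1 key2

/-- A matrix regarded as a vector in Euclidean space. -/
noncomputable def toEuc {p m : ℕ} (M : Matrix (Fin p) (Fin m) ℂ) :
    EuclideanSpace ℂ (Fin p × Fin m) := WithLp.toLp 2 (fun jk => M jk.1 jk.2)

lemma frobSq_eq_norm_sq {p m : ℕ} (M : Matrix (Fin p) (Fin m) ℂ) :
    frobSq M = ‖toEuc M‖ ^ 2 := by
  rw [EuclideanSpace.norm_eq, Real.sq_sqrt (Finset.sum_nonneg fun _ _ => sq_nonneg _)]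
  rw [Fintype.sum_prod_type, frobSq]
  exact Finset.sum_congr rfl fun j _ => Finset.sum_congr rfl fun k _ => by
    rfl

lemma frobSq_nonneg {p m : ℕ} (M : Matrix (Fin p) (Fin m) ℂ) : 0 ≤ frobSq M :=
  Finset.sum_nonneg fun _ _ => Finset.sum_nonneg fun _ _ => sq_nonneg _

lemma arith_aux (X T A P : ℝ) (hA : A ≠ 0) (hP : P ≠ 0) :
    (1:ℝ)/(2*P) * (X * (1/A * T)) = X/(2*A) * (1/P * T) := by
  field_simp

lemma frobSq_smul {p m : ℕ} (c : ℂ) (M : Matrix (Fin p) (Fin m) ℂ) :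
    frobSq (c • M) = ‖c‖ ^ 2 * frobSq M := by
  simp [frobSq, Matrix.smul_apply, smul_eq_mul, _root_.map_mul, mul_pow, Finset.mul_sum]

theorem freq_limited_H2_truncation_error_bound
    (E : Type*) [Fintype E] (p m : ℕ)
    (lam : E → ℂ) (hlam : ∀ i, (lam i).re < 0)
    (Φ : E → Matrix (Fin p) (Fin m) ℂ) (ω : ℝ) (hω : 0 < ω) :
    Real.sqrt (((1 : ℝ) / (2 * Real.pi)) *
        ∫ ν in (-ω)..ω, frobSq (∑ i, (Complex.I * (ν : ℂ) - lam i)⁻¹ • Φ i)) ≤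
      ∑ i, (frobNorm (Φ i) / Real.sqrt (-2 * (lam i).re)) *
        Real.sqrt (-(2 / Real.pi) * (catan ((ω : ℂ) / lam i)).re) := by
  classical
  have hπ : 0 < Real.pi := Real.pi_pos
  have hωle : -ω ≤ ω := by linarith
  set μ : Measure ℝ := volume.restrict (Set.Ioc (-ω) ω) with hμ
  haveI : IsFiniteMeasure μ :=
    ⟨by rw [hμ, Measure.restrict_apply_univ]; exact measure_Ioc_lt_top⟩
  set a : E → ℝ := fun i => -(lam i).re with ha
  have hapos : ∀ i, 0 < a i := fun i => neg_pos.2 (hlam i)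
  -- the vector-valued functions
  set f : E → ℝ → EuclideanSpace ℂ (Fin p × Fin m) :=
    fun i ν => toEuc ((Complex.I * (ν : ℂ) - lam i)⁻¹ • Φ i) with hfdef
  have hre : ∀ i (ν : ℝ), (Complex.I * (ν : ℂ) - lam i).re = a i := by
    intro i ν; simp [ha]
  have hne : ∀ i (ν : ℝ), Complex.I * (ν : ℂ) - lam i ≠ 0 := by
    intro i ν h0
    have := hre i ν
    rw [h0] at this
    simp at this
    exact absurd this.symm (ne_of_gt (hapos i))
  have habs : ∀ i (ν : ℝ), a i ≤ ‖Complex.I * (ν : ℂ) - lam i‖ := by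
    intro i ν
    calc a i = (Complex.I * (ν : ℂ) - lam i).re := (hre i ν).symm
      _ ≤ |(Complex.I * (ν : ℂ) - lam i).re| := le_abs_self _
      _ ≤ _ := Complex.abs_re_le_norm _
  -- f i as scalar • constant vector
  have hfsmul : ∀ i (ν : ℝ),
      f i ν = (Complex.I * (ν : ℂ) - lam i)⁻¹ • toEuc (Φ i) := fun i ν => rfl
  have hcont : ∀ i, Continuous (f i) := by
    intro i
    have h1 : Continuous fun ν : ℝ => (Complex.I * (ν : ℂ) - lam i)⁻¹ :=
      ((continuous_const.mul Complex.continuous_ofReal).sub continuous_const).inv₀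
        (fun ν => hne i ν)
    rw [funext (hfsmul i)]; exact h1.smul (continuous_const (y := toEuc (Φ i)))
  have hmem : ∀ i, MemLp (f i) 2 μ := by
    intro i
    refine MemLp.of_bound (hcont i).aestronglyMeasurable ((a i)⁻¹ * ‖toEuc (Φ i)‖) ?_
    filter_upwards with ν
    rw [hfsmul i ν, norm_smul]
    have h1 : ‖(Complex.I * (ν : ℂ) - lam i)⁻¹‖ ≤ (a i)⁻¹ := by
      rw [norm_inv]
      exact inv_anti₀ (hapos i) (habs i ν)
    exact mul_le_mul_of_nonneg_right h1 (norm_nonneg _)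
  -- identify the integrand with the Euclidean norm
  have hnorm_sq : ∀ ν : ℝ,
      frobSq (∑ i, (Complex.I * (ν : ℂ) - lam i)⁻¹ • Φ i) = ‖∑ i, f i ν‖^2 := by
    intro ν
    rw [frobSq_eq_norm_sq]
    have hsum : toEuc (∑ i, (Complex.I * (ν : ℂ) - lam i)⁻¹ • Φ i) = ∑ i, f i ν := by
      ext jk
      rw [WithLp.ofLp_sum, Finset.sum_apply jk Finset.univ (fun i => (f i ν).ofLp)]
      simp [hfdef, toEuc, Matrix.sum_apply, Finset.sum_apply]
    rw [hsum]
  -- per-index integral computation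
  have hint : ∀ i, ∫ ν, ‖f i ν‖^2 ∂μ
      = frobSq (Φ i) * ((1/(a i)) * (Real.arctan ((ω - (lam i).im)/(a i))
          + Real.arctan ((ω + (lam i).im)/(a i)))) := by
    intro i
    have hptw : ∀ ν : ℝ, ‖f i ν‖^2
        = frobSq (Φ i) * ((a i)^2 + (ν - (lam i).im)^2)⁻¹ := by
      intro ν
      rw [← frobSq_eq_norm_sq, frobSq_smul]
      have h1 : ‖(Complex.I * (ν : ℂ) - lam i)⁻¹‖ ^ 2
          = ((a i)^2 + (ν - (lam i).im)^2)⁻¹ := by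
        rw [norm_inv, inv_pow, Complex.sq_norm, Complex.normSq_apply, hre i ν]
        have him : (Complex.I * (ν : ℂ) - lam i).im = ν - (lam i).im := by simp
        rw [him]
        ring_nf
      rw [h1]; ring
    calc ∫ ν, ‖f i ν‖^2 ∂μ
        = ∫ ν, frobSq (Φ i) * ((a i)^2 + (ν - (lam i).im)^2)⁻¹ ∂μ := by
          exact integral_congr_ae (Filter.Eventually.of_forall hptw)
      _ = frobSq (Φ i) * ∫ ν, ((a i)^2 + (ν - (lam i).im)^2)⁻¹ ∂μ :=
          integral_const_mul _ _
      _ = frobSq (Φ i) * ∫ ν in (-ω)..ω, ((a i)^2 + (ν - (lam i).im)^2)⁻¹ := by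
          rw [intervalIntegral.integral_of_le hωle]
      _ = _ := by rw [integral_inv_sq_add _ _ _ (hapos i)]
  -- rewrite the LHS using the restricted measure
  have hS : (∫ ν in (-ω)..ω, frobSq (∑ i, (Complex.I * (ν : ℂ) - lam i)⁻¹ • Φ i))
      = ∫ ν, ‖∑ i, f i ν‖^2 ∂μ := by
    rw [intervalIntegral.integral_of_le hωle]
    exact integral_congr_ae (Filter.Eventually.of_forall hnorm_sq)
  rw [hS, Real.sqrt_mul (by positivity : (0:ℝ) ≤ 1/(2*Real.pi))]
  have hmink := sqrt_integral_sum_le μ f hmem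
  calc Real.sqrt (1/(2*Real.pi)) * Real.sqrt (∫ ν, ‖∑ i, f i ν‖^2 ∂μ)
      ≤ Real.sqrt (1/(2*Real.pi)) * ∑ i, Real.sqrt (∫ ν, ‖f i ν‖^2 ∂μ) :=
        mul_le_mul_of_nonneg_left hmink (Real.sqrt_nonneg _)
    _ = ∑ i, Real.sqrt (1/(2*Real.pi)) * Real.sqrt (∫ ν, ‖f i ν‖^2 ∂μ) := by
        rw [Finset.mul_sum]
    _ = _ := by
        refine Finset.sum_congr rfl fun i _ => ?_
        rw [← Real.sqrt_mul (by positivity : (0:ℝ) ≤ 1/(2*Real.pi)), hint i]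
        -- rewrite the RHS factor using catan_re
        have hT : -(2/Real.pi) * (catan ((ω : ℂ) / lam i)).re
            = (1/Real.pi) * (Real.arctan ((ω - (lam i).im)/(a i))
                + Real.arctan ((ω + (lam i).im)/(a i))) := by
          have h := catan_re (lam i) (hlam i) ω
          rw [show -(2/Real.pi) * (catan ((ω : ℂ) / lam i)).re
              = (1/Real.pi) * (-2 * (catan ((ω : ℂ) / lam i)).re) by ring, h]
        have hai := hapos i
        have h2a : -2 * (lam i).re = 2 * a i := by simp only [ha]; ring
        rw [hT, h2a, frobNorm, ← Real.sqrt_div (frobSq_nonneg _),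
          ← Real.sqrt_mul (div_nonneg (frobSq_nonneg _) (by linarith))]
        congr 1
        exact arith_aux _ _ _ _ (ne_of_gt hai) (ne_of_gt hπ)
end

section
/- Let n, p, m be natural numbers, let λ : Fin n → ℂ satisfy Re(λ i) < 0 for all i, and let Φ : Fin n → Matrix (Fin p) (Fin m) ℂ. Define Q ∈ Matrix (Fin n) (Fin n) ℂ by Q i j = tr(Φ i · (Φ j)ᴴ) / (−λ i − conj(λ j)). Then Q is Hermitian and positive semidefinite: Qᴴ = Q, and for every x : Fin n → ℂ, the quadratic form xᴴ Q x is a nonnegative real number. -/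
open Complex Matrix MeasureTheory Set Filter
open scoped ComplexOrder Real Topology

lemma cexp_intOn {c : ℂ} (hc : c.re < 0) :
    IntegrableOn (fun t : ℝ => Complex.exp (c * t)) (Ioi 0) := by
  have hb : 0 < -c.re := by linarith
  refine (exp_neg_integrableOn_Ioi 0 hb).mono' ?_ ?_
  · exact (Complex.continuous_exp.comp (by continuity)).aestronglyMeasurable
  · filter_upwards with t
    simp [Complex.norm_exp, Complex.mul_re, le_of_eq, mul_comm]

lemma cexp_deriv (c : ℂ) (x : ℝ) :
    HasDerivAt (fun t : ℝ => Complex.exp (c * t)) (Complex.exp (c * x) * c) x := by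
  have h1 : HasDerivAt (fun t : ℝ => c * (t : ℂ)) c x := by
    simpa using (Complex.ofRealCLM.hasDerivAt (x := x)).const_mul c
  exact h1.cexp

lemma cexp_integral {c : ℂ} (hc : c.re < 0) :
    ∫ t in Ioi (0:ℝ), Complex.exp (c * t) = -c⁻¹ := by
  have hc0 : c ≠ 0 := fun h => by simp [h] at hc
  have hderiv : ∀ x ∈ Ici (0:ℝ), HasDerivAt (fun t : ℝ => c⁻¹ * Complex.exp (c * t))
      (Complex.exp (c * x)) x := by
    intro x _
    have h := (cexp_deriv c x).const_mul c⁻¹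
    have e : c⁻¹ * (Complex.exp (c * x) * c) = Complex.exp (c * x) := by field_simp
    rwa [e] at h
  have htend : Tendsto (fun t : ℝ => c⁻¹ * Complex.exp (c * t)) atTop (𝓝 0) := by
    rw [tendsto_zero_iff_norm_tendsto_zero]
    have h1 : Tendsto (fun t : ℝ => c.re * t) atTop atBot :=
      tendsto_id.const_mul_atTop_of_neg hc
    have h2 : Tendsto (fun t : ℝ => Real.exp (c.re * t)) atTop (𝓝 0) :=
      Real.tendsto_exp_atBot.comp h1
    have h3 := h2.const_mul ‖(c⁻¹ : ℂ)‖
    simp only [mul_zero] at h3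
    refine h3.congr fun t => ?_
    simp [Complex.norm_exp, Complex.mul_re]
  have := integral_Ioi_of_hasDerivAt_of_tendsto' hderiv (cexp_intOn hc) htend
  simpa using this

theorem Q_matrix_hermitian_posSemidef
    (n p m : ℕ) (lam : Fin n → ℂ) (hlam : ∀ i, (lam i).re < 0)
    (Φ : Fin n → Matrix (Fin p) (Fin m) ℂ)
    (Q : Matrix (Fin n) (Fin n) ℂ)
    (hQ : ∀ i j, Q i j = (Φ i * (Φ j)ᴴ).trace / (-lam i - (starRingEnd ℂ) (lam j))) :
    Qᴴ = Q ∧ Q.PosSemidef := by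
  have hherm : Qᴴ = Q := by
    ext i j
    simp only [conjTranspose_apply, hQ]
    rw [star_div₀]
    congr 1
    · rw [← Matrix.trace_conjTranspose, conjTranspose_mul, conjTranspose_conjTranspose]
    · simp only [star_sub, star_neg, RCLike.star_def, Complex.conj_conj]
      ring
  refine ⟨hherm, posSemidef_iff_dotProduct_mulVec.mpr ⟨hherm, fun x => ?_⟩⟩
  classical
  set T : Fin n → Fin n → ℂ := fun i j => (Φ i * (Φ j)ᴴ).trace with hT
  have hc : ∀ i j : Fin n, (lam i + (starRingEnd ℂ) (lam j)).re < 0 := by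
    intro i j; have := hlam i; have := hlam j
    simp only [Complex.add_re, Complex.conj_re]; linarith
  set N : ℝ → Matrix (Fin p) (Fin m) ℂ :=
    fun t => ∑ i, ((starRingEnd ℂ) (x i) * Complex.exp (lam i * t)) • Φ i with hN
  have hS : star x ⬝ᵥ Q *ᵥ x
      = ∑ i, ∑ j, (starRingEnd ℂ) (x i) * x j * T i j *
          ∫ t in Ioi (0:ℝ), Complex.exp ((lam i + (starRingEnd ℂ) (lam j)) * t) := by
    simp only [dotProduct, mulVec, dotProduct, Finset.mul_sum]
    refine Finset.sum_congr rfl fun i _ => Finset.sum_congr rfl fun j _ => ?_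
    rw [cexp_integral (hc i j), hQ]
    have e : -(lam i + (starRingEnd ℂ) (lam j))⁻¹
        = (-lam i - (starRingEnd ℂ) (lam j))⁻¹ := by
      rw [← inv_neg]; ring_nf
    rw [e, div_eq_mul_inv]
    simp only [Pi.star_apply, RCLike.star_def, hT]
    ring
  have hint : ∀ i j : Fin n, IntegrableOn
      (fun t : ℝ => (starRingEnd ℂ) (x i) * x j * T i j *
        Complex.exp ((lam i + (starRingEnd ℂ) (lam j)) * t)) (Ioi 0) := by
    intro i j
    simpa only [IntegrableOn, mul_assoc] using (cexp_intOn (hc i j)).const_mul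
      ((starRingEnd ℂ) (x i) * x j * T i j)
  have hS2 : star x ⬝ᵥ Q *ᵥ x = ∫ t in Ioi (0:ℝ), ∑ i, ∑ j,
      (starRingEnd ℂ) (x i) * x j * T i j *
        Complex.exp ((lam i + (starRingEnd ℂ) (lam j)) * t) := by
    rw [hS, integral_finset_sum _ (fun i _ =>
      integrable_finset_sum _ (fun j _ => hint i j))]
    refine Finset.sum_congr rfl fun i _ => ?_
    rw [integral_finset_sum _ (fun j _ => hint i j)]
    exact Finset.sum_congr rfl fun j _ => (integral_const_mul _ _).symm
  have h1 : ∀ t : ℝ, (∑ i, ∑ j, (starRingEnd ℂ) (x i) * x j * T i j *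
        Complex.exp ((lam i + (starRingEnd ℂ) (lam j)) * t))
      = (N t * (N t)ᴴ).trace := by
    intro t
    rw [hN, conjTranspose_sum, Matrix.sum_mul, trace_sum]
    refine Finset.sum_congr rfl fun i _ => ?_
    rw [Matrix.mul_sum, trace_sum]
    refine Finset.sum_congr rfl fun j _ => ?_
    rw [conjTranspose_smul, Matrix.smul_mul, Matrix.mul_smul, smul_smul, trace_smul,
      smul_eq_mul]
    rw [add_mul, Complex.exp_add]
    rw [show star ((starRingEnd ℂ) (x j) * Complex.exp (lam j * t))
        = x j * Complex.exp ((starRingEnd ℂ) (lam j) * t) by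
      rw [RCLike.star_def, _root_.map_mul, Complex.conj_conj, ← Complex.exp_conj,
        _root_.map_mul, Complex.conj_ofReal]]
    rw [hT]
    ring
  have h2 : ∀ t : ℝ, (N t * (N t)ᴴ).trace
      = ((∑ a, ∑ b, Complex.normSq ((N t) a b) : ℝ) : ℂ) := by
    intro t
    push_cast
    simp [Matrix.trace, Matrix.diag, Matrix.mul_apply, Matrix.conjTranspose_apply,
      Complex.mul_conj]
  have key : star x ⬝ᵥ Q *ᵥ x
      = ((∫ t in Ioi (0:ℝ), ∑ a, ∑ b, Complex.normSq ((N t) a b) : ℝ) : ℂ) := by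
    rw [hS2]
    simp_rw [h1, h2]
    exact integral_ofReal
  rw [key]
  exact Complex.zero_le_real.mpr <| integral_nonneg fun t =>
    Finset.sum_nonneg fun a _ => Finset.sum_nonneg fun b _ => Complex.normSq_nonneg _
end

section
/- Let λ, μ ∈ ℂ with Re(λ) < 0 and Re(μ) < 0, and let ω > 0. Then the complex-valued integral (1/(2π)) · ∫_{ν ∈ [−ω, ω]} ((I·ν − λ) · (−I·ν − μ))⁻¹ dν = (1/π) · (atan(ω / λ) + atan(ω / μ)) / (λ + μ). -/
open MeasureTheory Complex

lemma log_div_of_pos_re {u w : ℂ} (hu : 0 < u.re) (hw : 0 < w.re) :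
    Complex.log (u / w) = Complex.log u - Complex.log w := by
  have hu0 : u ≠ 0 := fun h => by simp [h] at hu
  have hw0 : w ≠ 0 := fun h => by simp [h] at hw
  have hau : |Complex.arg u| < Real.pi / 2 := Complex.abs_arg_lt_pi_div_two_iff.2 (Or.inl hu)
  have haw : |Complex.arg w| < Real.pi / 2 := Complex.abs_arg_lt_pi_div_two_iff.2 (Or.inl hw)
  have hwπ : Complex.arg w ≠ Real.pi := by
    intro h
    exact absurd (Complex.arg_eq_pi_iff.1 h).1 (by linarith)
  rw [div_eq_mul_inv, Complex.log_mul hu0 (inv_ne_zero hw0), Complex.log_inv w hwπ,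
    sub_eq_add_neg]
  have hargi : Complex.arg w⁻¹ = -Complex.arg w := by
    rw [Complex.arg_inv, if_neg hwπ]
  rw [hargi]
  constructor
  · rw [abs_lt] at hau haw; linarith
  · rw [abs_lt] at hau haw; linarith

lemma catan_key {lam : ℂ} (hlam : lam.re < 0) (ω : ℝ) :
    catan ((ω : ℂ) / lam) =
      (Complex.I / 2) *
        (Complex.log (Complex.I * (ω : ℂ) - lam) -
          Complex.log (-(Complex.I * (ω : ℂ)) - lam)) := by
  have hl0 : lam ≠ 0 := fun h => by simp [h] at hlam
  have h1 : (1 : ℂ) + Complex.I * ((ω : ℂ) / lam) =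
      (-(Complex.I * (ω : ℂ)) - lam) / (-lam) := by
    rw [show -(Complex.I * (ω : ℂ)) - lam = -(Complex.I * (ω : ℂ) + lam) by ring,
      neg_div_neg_eq]
    field_simp
    ring
  have h2 : (1 : ℂ) - Complex.I * ((ω : ℂ) / lam) =
      (Complex.I * (ω : ℂ) - lam) / (-lam) := by
    rw [show Complex.I * (ω : ℂ) - lam = -(lam - Complex.I * (ω : ℂ)) by ring,
      neg_div_neg_eq]
    field_simp
  have hre1 : 0 < (-(Complex.I * (ω : ℂ)) - lam).re := by
    simp [Complex.sub_re, Complex.neg_re, Complex.mul_re]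
    linarith
  have hre2 : 0 < (Complex.I * (ω : ℂ) - lam).re := by
    simp [Complex.sub_re, Complex.mul_re]
    linarith
  have hrel : 0 < (-lam).re := by simpa using hlam
  rw [catan, h1, h2, log_div_of_pos_re hre1 hrel, log_div_of_pos_re hre2 hrel]
  have hI : Complex.I ≠ 0 := Complex.I_ne_zero
  field_simp
  ring_nf
  rw [Complex.I_sq]
  ring

theorem freq_limited_H2_cross_term_integral
    (lam mu : ℂ) (hlam : lam.re < 0) (hmu : mu.re < 0) (ω : ℝ) (hω : 0 < ω) :
    (1 / (2 * (Real.pi : ℂ))) *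
        (∫ ν in (-ω)..ω,
          ((Complex.I * (ν : ℂ) - lam) * (-(Complex.I * (ν : ℂ)) - mu))⁻¹) =
      (1 / (Real.pi : ℂ)) * (catan ((ω : ℂ) / lam) + catan ((ω : ℂ) / mu)) / (lam + mu) := by
  have hsum : lam + mu ≠ 0 := by
    intro h
    have : (lam + mu).re = 0 := by rw [h]; simp
    simp [Complex.add_re] at this
    linarith
  have hne1 : ∀ ν : ℝ, Complex.I * (ν : ℂ) - lam ≠ 0 := by
    intro ν h
    have : (Complex.I * (ν : ℂ) - lam).re = 0 := by rw [h]; simp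
    simp [Complex.sub_re, Complex.mul_re] at this
    linarith
  have hne2 : ∀ ν : ℝ, -(Complex.I * (ν : ℂ)) - mu ≠ 0 := by
    intro ν h
    have : (-(Complex.I * (ν : ℂ)) - mu).re = 0 := by rw [h]; simp
    simp [Complex.sub_re, Complex.neg_re, Complex.mul_re] at this
    linarith
  -- antiderivative
  set F : ℝ → ℂ := fun ν =>
    (Complex.I / (lam + mu)) *
      (Complex.log (Complex.I * (ν : ℂ) - lam) - Complex.log (-(Complex.I * (ν : ℂ)) - mu))
    with hF
  have hderiv : ∀ ν ∈ Set.uIcc (-ω) ω,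
      HasDerivAt F (((Complex.I * (ν : ℂ) - lam) * (-(Complex.I * (ν : ℂ)) - mu))⁻¹) ν := by
    intro ν _
    have hg1 : HasDerivAt (fun ν : ℝ => Complex.I * (ν : ℂ) - lam) Complex.I ν := by
      simpa using (Complex.ofRealCLM.hasDerivAt.const_mul Complex.I).sub_const lam
    have hg2 : HasDerivAt (fun ν : ℝ => -(Complex.I * (ν : ℂ)) - mu) (-Complex.I) ν := by
      simpa using ((Complex.ofRealCLM.hasDerivAt.const_mul Complex.I).neg).sub_const mu
    have hs1 : Complex.I * (ν : ℂ) - lam ∈ Complex.slitPlane := by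
      rw [Complex.mem_slitPlane_iff]
      left
      simp [Complex.sub_re, Complex.mul_re]
      linarith
    have hs2 : -(Complex.I * (ν : ℂ)) - mu ∈ Complex.slitPlane := by
      rw [Complex.mem_slitPlane_iff]
      left
      simp [Complex.sub_re, Complex.neg_re, Complex.mul_re]
      linarith
    have hl1 := hg1.clog_real hs1
    have hl2 := hg2.clog_real hs2
    have := ((hl1.sub hl2).const_mul (Complex.I / (lam + mu)))
    convert this using 1
    · rfl
    · rfl
    have h1 := hne1 ν
    have h2 := hne2 ν
    field_simp
    linear_combination (lam + mu) * Complex.I_sq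
  have hcont : Continuous
      (fun ν : ℝ => ((Complex.I * (ν : ℂ) - lam) * (-(Complex.I * (ν : ℂ)) - mu))⁻¹) := by
    apply Continuous.inv₀
    · fun_prop
    · intro ν
      exact mul_ne_zero (hne1 ν) (hne2 ν)
  have hint := intervalIntegral.integral_eq_sub_of_hasDerivAt hderiv
    (hcont.intervalIntegrable _ _)
  rw [hint]
  rw [catan_key hlam ω, catan_key hmu ω]
  have hneg : ((-ω : ℝ) : ℂ) = -(ω : ℂ) := by push_cast; ring
  simp only [hF, hneg]
  have hπ : (Real.pi : ℂ) ≠ 0 := by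
    exact_mod_cast Real.pi_ne_zero
  have hrw : Complex.I * -(ω : ℂ) = -(Complex.I * (ω : ℂ)) := by ring
  rw [hrw, neg_neg]
  field_simp
  ring
end
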